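/- arXiv:2103.10580 — 4 statements merged into one kernel-verified Lean document; each statement's English description precedes it below -/
import Mathlib

section
/- Let G be a finite connected simple graph and let ℓ(G) be the length (number of edges) of a longest path in G. Then the Laplacian matching polynomial 𝓛𝓜(G, x) has at least ℓ(G) distinct positive real roots. -/
namespace LM

open Finset

variable {V : Type*}

/-- The set of matchings of `G`, as finsets of edges that pairwise share no vertex. -/
def matchings [Fintype V] [DecidableEq V] (G : SimpleGraph V) [DecidableRel G.Adj] :
    Finset (Finset (Sym2 V)) :=
  G.edgeFinset.powerset.filter
    (fun M => ∀ e ∈ M, ∀ f ∈ M, e ≠ f → ∀ w : V, w ∈ e → w ∉ f)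

/-- The set of vertices covered by a set of edges. -/
def covered [Fintype V] [DecidableEq V] (M : Finset (Sym2 V)) : Finset V :=
  Finset.univ.filter (fun v => ∃ e ∈ M, v ∈ e)

/-- The multivariate matching polynomial `𝔐(G, x_G)`. -/
noncomputable def mvMatch [Fintype V] [DecidableEq V] (G : SimpleGraph V)
    [DecidableRel G.Adj] : MvPolynomial V ℝ :=
  ∑ M ∈ matchings G, (-1 : MvPolynomial V ℝ) ^ M.card *
    ∏ v ∈ Finset.univ \ covered M, MvPolynomial.X v

/-- The matching polynomial `𝓜(G, x)`. -/
noncomputable def matchPoly [Fintype V] [DecidableEq V] (G : SimpleGraph V)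
    [DecidableRel G.Adj] : Polynomial ℝ :=
  ∑ M ∈ matchings G, (-1 : Polynomial ℝ) ^ M.card *
    Polynomial.X ^ (Fintype.card V - 2 * M.card)

/-- The Laplacian matching polynomial `𝓛𝓜(G, x)`. -/
noncomputable def lapMatch [Fintype V] [DecidableEq V] (G : SimpleGraph V)
    [DecidableRel G.Adj] : Polynomial ℝ :=
  ∑ M ∈ matchings G, (-1 : Polynomial ℝ) ^ M.card *
    ∏ v ∈ Finset.univ \ covered M, (Polynomial.X - Polynomial.C (G.degree v : ℝ))

/-- The largest real root of a polynomial (`sSup` of its set of real roots). -/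
noncomputable def lroot (p : Polynomial ℝ) : ℝ := sSup {x : ℝ | p.IsRoot x}

instance instDecidableRelInduceAdj (G : SimpleGraph V) [DecidableRel G.Adj] (s : Set V) :
    DecidableRel (G.induce s).Adj := fun a b =>
  inferInstanceAs (Decidable (G.Adj a b))

/-! ### Auxiliary development -/

open Polynomial

section PolyAux

/-- If every element of `S` is a root of `p`, then `∏ (X - C x)` over `S` divides `p`. -/
lemma prod_X_sub_C_dvd_of_isRoot (S : Finset ℝ) (p : Polynomial ℝ)
    (h : ∀ x ∈ S, p.IsRoot x) : (∏ x ∈ S, (X - C x)) ∣ p := by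
  classical
  induction S using Finset.induction_on generalizing p with
  | empty => simp
  | @insert x S hx ih =>
    have hroot : p.IsRoot x := h x (Finset.mem_insert_self x S)
    obtain ⟨q, hq⟩ := (dvd_iff_isRoot).mpr hroot
    have hq' : ∀ y ∈ S, q.IsRoot y := by
      intro y hy
      have hyx : y ≠ x := fun hxy => hx (hxy ▸ hy)
      have := h y (Finset.mem_insert_of_mem hy)
      rw [IsRoot, hq, eval_mul, eval_sub, eval_X, eval_C] at this
      rcases mul_eq_zero.mp this with h1 | h1
      · exact absurd (sub_eq_zero.mp h1) hyx
      · exact h1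
    rw [Finset.prod_insert hx, hq]
    exact mul_dvd_mul_left _ (ih q hq')

/-- Sign of a product of nonzero reals. -/
lemma sign_prod (S : Finset ℝ) (g : ℝ → ℝ) (h : ∀ a ∈ S, g a ≠ 0) :
    0 < (-1 : ℝ) ^ (S.filter (fun a => g a < 0)).card * ∏ a ∈ S, g a := by
  classical
  induction S using Finset.induction_on with
  | empty => simp
  | @insert a S hanotin ih =>
    have ha : g a ≠ 0 := h a (Finset.mem_insert_self a S)
    have ih' := ih (fun b hb => h b (Finset.mem_insert_of_mem hb))
    rw [Finset.prod_insert hanotin, Finset.filter_insert]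
    rcases lt_or_gt_of_ne ha with hneg | hpos
    · rw [if_pos hneg, Finset.card_insert_of_notMem (fun hc => hanotin (Finset.mem_of_mem_filter _ hc))]
      rw [pow_succ]
      calc (0:ℝ) < ((-1) ^ (S.filter fun a => g a < 0).card * ∏ a ∈ S, g a) * (-g a) := by
            exact mul_pos ih' (by linarith)
        _ = (-1) ^ (S.filter fun a => g a < 0).card * -1 * (g a * ∏ a ∈ S, g a) := by ring
    · rw [if_neg (by exact not_lt.mpr hpos.le)]
      calc (0:ℝ) < g a * ((-1) ^ (S.filter fun a => g a < 0).card * ∏ a ∈ S, g a) :=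
            mul_pos hpos ih'
        _ = (-1) ^ (S.filter fun a => g a < 0).card * (g a * ∏ a ∈ S, g a) := by ring

/-- Sign of `∏ (x - t)` over a finset not containing `x`. -/
lemma sign_prod_sub (S : Finset ℝ) (x : ℝ) (hx : x ∉ S) :
    0 < (-1 : ℝ) ^ (S.filter (fun t => x < t)).card * ∏ t ∈ S, (x - t) := by
  have h : ∀ t ∈ S, x - t ≠ 0 := by
    intro t ht
    exact sub_ne_zero.mpr (fun hxt => hx (hxt ▸ ht))
  have := sign_prod S (fun t => x - t) h
  have hfe : S.filter (fun t => x - t < 0) = S.filter (fun t => x < t) := by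
    apply Finset.filter_congr
    intro t _
    simp [sub_neg]
  rwa [hfe] at this

/-- **Key analytic lemma**: one continued-fraction step.  Given distinct real poles `Θ` with
positive residues `Cf`, the polynomial `(X - a) ∏ (X - θ) - ∑ Cf θ ∏_{θ' ≠ θ} (X - θ')`
has `|Θ| + 1` distinct real roots which strictly interlace `Θ`, and the corresponding new
residues are again positive. -/
lemma key (Θ : Finset ℝ) (Cf : ℝ → ℝ) (hC : ∀ θ ∈ Θ, 0 < Cf θ) (a : ℝ) :
    ∃ (Ξ : Finset ℝ) (d : ℝ → ℝ),
      Ξ.card = Θ.card + 1 ∧ (∀ ξ ∈ Ξ, 0 < d ξ) ∧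
      (X - C a) * ∏ θ ∈ Θ, (X - C θ) - ∑ θ ∈ Θ, C (Cf θ) * ∏ θ' ∈ Θ.erase θ, (X - C θ')
        = ∏ ξ ∈ Ξ, (X - C ξ) ∧
      ∏ θ ∈ Θ, (X - C θ) = ∑ ξ ∈ Ξ, C (d ξ) * ∏ ξ' ∈ Ξ.erase ξ, (X - C ξ') := by
  classical
  set m := Θ.card with hmdef
  set Gp : Polynomial ℝ := (X - C a) * ∏ θ ∈ Θ, (X - C θ)
      - ∑ θ ∈ Θ, C (Cf θ) * ∏ θ' ∈ Θ.erase θ, (X - C θ') with hGpdef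
  -- degree and monicity facts
  have hprod_monic : ∀ S : Finset ℝ, (∏ t ∈ S, (X - C t)).Monic :=
    fun S => monic_prod_of_monic _ _ (fun t _ => monic_X_sub_C t)
  have hprod_deg : ∀ S : Finset ℝ, (∏ t ∈ S, (X - C t)).natDegree = S.card := by
    intro S
    rw [Polynomial.natDegree_prod _ _ (fun t _ => X_sub_C_ne_zero t)]
    simp [natDegree_X_sub_C]
  have hA_monic : ((X - C a) * ∏ θ ∈ Θ, (X - C θ)).Monic :=
    (monic_X_sub_C a).mul (hprod_monic Θ)
  have hA_deg : ((X - C a) * ∏ θ ∈ Θ, (X - C θ)).natDegree = m + 1 := by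
    rw [natDegree_mul (X_sub_C_ne_zero a) (hprod_monic Θ).ne_zero, natDegree_X_sub_C,
      hprod_deg]
    omega
  have hB_deg : (∑ θ ∈ Θ, C (Cf θ) * ∏ θ' ∈ Θ.erase θ, (X - C θ')).degree
      < ((X - C a) * ∏ θ ∈ Θ, (X - C θ)).degree := by
    rw [Polynomial.degree_eq_natDegree hA_monic.ne_zero, hA_deg]
    apply lt_of_le_of_lt (Polynomial.degree_sum_le _ _)
    rw [Finset.sup_lt_iff (by exact_mod_cast WithBot.bot_lt_coe (m+1))]
    intro θ hθ
    apply lt_of_le_of_lt (Polynomial.degree_mul_le _ _)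
    have h2 : (∏ θ' ∈ Θ.erase θ, (X - C θ')).degree = (((Θ.erase θ).card : ℕ) : WithBot ℕ) := by
      rw [Polynomial.degree_eq_natDegree (hprod_monic _).ne_zero, hprod_deg]
    calc (C (Cf θ)).degree + (∏ θ' ∈ Θ.erase θ, (X - C θ')).degree
        ≤ 0 + (((Θ.erase θ).card : ℕ) : WithBot ℕ) := add_le_add degree_C_le (le_of_eq h2)
      _ = (((Θ.erase θ).card : ℕ) : WithBot ℕ) := zero_add _
      _ < ((m + 1 : ℕ) : WithBot ℕ) := by
          rw [Nat.cast_lt]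
          have := Finset.card_erase_add_one hθ
          omega
  have hGp_monic : Gp.Monic := by
    rw [hGpdef, sub_eq_add_neg]
    exact hA_monic.add_of_left (by rwa [degree_neg])
  have hGp_deg : Gp.natDegree = m + 1 := by
    have hdeq : Gp.degree = ((X - C a) * ∏ θ ∈ Θ, (X - C θ)).degree := by
      rw [hGpdef]
      exact degree_sub_eq_left_of_degree_lt hB_deg
    rw [Polynomial.degree_eq_natDegree hA_monic.ne_zero, hA_deg] at hdeq
    exact natDegree_eq_of_degree_eq_some hdeq
  -- sorted enumeration of Θ
  set η : Fin m → ℝ := fun i => ((Θ.orderIsoOfFin hmdef.symm) i : ℝ) with hηdef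
  have hηmono : StrictMono η := by
    intro i j hij
    exact Subtype.coe_lt_coe.mpr ((Θ.orderIsoOfFin hmdef.symm).strictMono hij)
  have hηmem : ∀ i, η i ∈ Θ := fun i => ((Θ.orderIsoOfFin hmdef.symm) i).2
  have hηsurj : ∀ θ ∈ Θ, ∃ i, η i = θ := by
    intro θ hθ
    exact ⟨(Θ.orderIsoOfFin hmdef.symm).symm ⟨θ, hθ⟩,
      congrArg Subtype.val ((Θ.orderIsoOfFin hmdef.symm).apply_symm_apply ⟨θ, hθ⟩)⟩
  -- cardinality of upper tails in `Fin k`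
  have hfincard : ∀ (k j : ℕ),
      (Finset.univ.filter (fun i : Fin k => j ≤ (i : ℕ))).card = k - j := by
    intro k j
    have hmap : Finset.univ.filter (fun i : Fin k => j ≤ (i : ℕ))
        = Finset.map ⟨fun b : Fin (k - j) => (⟨j + (b : ℕ), by have := b.isLt; omega⟩ : Fin k),
            fun b1 b2 hb => by
              apply Fin.ext
              have := congrArg Fin.val hb
              simp only at this
              omega⟩ Finset.univ := by
      ext i
      simp only [Finset.mem_filter, Finset.mem_univ, true_and, Finset.mem_map,
        Function.Embedding.coeFn_mk]
      constructor
      · intro hji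
        refine ⟨⟨(i : ℕ) - j, by have := i.isLt; omega⟩, ?_⟩
        apply Fin.ext
        show j + ((i : ℕ) - j) = (i : ℕ)
        omega
      · rintro ⟨b, rfl⟩
        exact Nat.le_add_right j b
    rw [hmap, Finset.card_map, Finset.card_univ, Fintype.card_fin]
  -- evaluation of Gp at the points of Θ
  have heval_η : ∀ i : Fin m,
      Gp.eval (η i) = -(Cf (η i) * ∏ t ∈ Θ.erase (η i), (η i - t)) := by
    intro i
    rw [hGpdef]
    rw [eval_sub, eval_mul, eval_prod]
    have h1 : (∏ θ ∈ Θ, ((X - C θ).eval (η i))) = 0 :=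
      Finset.prod_eq_zero (hηmem i) (by simp)
    rw [h1, mul_zero, eval_finset_sum]
    rw [Finset.sum_eq_single (η i)]
    · simp [eval_prod]
    · intro θ hθ hne
      rw [eval_mul, eval_prod]
      have hmem : η i ∈ Θ.erase θ := Finset.mem_erase.mpr ⟨fun hh => hne hh.symm, hηmem i⟩
      rw [Finset.prod_eq_zero hmem (by simp), mul_zero]
    · intro hcon
      exact absurd (hηmem i) hcon
  -- sign of Gp at the points of Θ
  have hsign_η : ∀ i : Fin m, 0 < (-1 : ℝ) ^ (m - (i : ℕ)) * Gp.eval (η i) := by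
    intro i
    have hnotmem : η i ∉ Θ.erase (η i) := Finset.notMem_erase _ _
    have hs := sign_prod_sub (Θ.erase (η i)) (η i) hnotmem
    have hcnt : ((Θ.erase (η i)).filter (fun t => η i < t)).card = m - 1 - (i : ℕ) := by
      have hstep1 : (Θ.erase (η i)).filter (fun t => η i < t)
          = Θ.filter (fun t => η i < t) := by
        ext t
        simp only [Finset.mem_filter, Finset.mem_erase]
        constructor
        · rintro ⟨⟨_, ht⟩, hlt⟩; exact ⟨ht, hlt⟩
        · rintro ⟨ht, hlt⟩; exact ⟨⟨ne_of_gt hlt, ht⟩, hlt⟩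
      have hstep2 : Θ.filter (fun t => η i < t)
          = Finset.image η (Finset.univ.filter
              (fun j : Fin m => (i : ℕ) + 1 ≤ (j : ℕ))) := by
        ext t
        simp only [Finset.mem_filter, Finset.mem_image, Finset.mem_univ, true_and]
        constructor
        · rintro ⟨ht, hlt⟩
          obtain ⟨j, rfl⟩ := hηsurj t ht
          refine ⟨j, ?_, rfl⟩
          have : i < j := hηmono.lt_iff_lt.mp hlt
          omega
        · rintro ⟨j, hj, rfl⟩
          refine ⟨hηmem j, hηmono ?_⟩
          rw [Fin.lt_def]
          omega
      rw [hstep1, hstep2, Finset.card_image_of_injective _ hηmono.injective,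
        hfincard m ((i : ℕ) + 1)]
      omega
    rw [hcnt] at hs
    rw [heval_η i]
    have hiLt := i.isLt
    have hexp : m - (i : ℕ) = (m - 1 - (i : ℕ)) + 1 := by omega
    rw [hexp, pow_succ]
    have hpos := mul_pos (hC (η i) (hηmem i)) hs
    calc (0 : ℝ) < Cf (η i) * ((-1) ^ (m - 1 - (i : ℕ))
          * ∏ t ∈ Θ.erase (η i), (η i - t)) := hpos
      _ = (-1) ^ (m - 1 - (i : ℕ)) * -1
          * -(Cf (η i) * ∏ t ∈ Θ.erase (η i), (η i - t)) := by ring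
  -- endpoints
  have hGp_deg_pos : 0 < Gp.degree := by
    rw [Polynomial.degree_eq_natDegree hGp_monic.ne_zero, hGp_deg]
    exact_mod_cast Nat.succ_pos m
  have htop : ∃ bpt : ℝ, (∀ i : Fin m, η i < bpt) ∧ 0 < Gp.eval bpt := by
    have htt := Polynomial.tendsto_atTop_of_leadingCoeff_nonneg Gp hGp_deg_pos
      (by rw [Monic.leadingCoeff hGp_monic]; norm_num)
    have h1 := htt.eventually_gt_atTop 0
    set bndT : ℝ := if h : Θ.Nonempty then Θ.max' h else 0 with hbndT
    have h2 := Filter.eventually_gt_atTop bndT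
    obtain ⟨bpt, hbpt⟩ := (h1.and h2).exists
    refine ⟨bpt, fun i => ?_, hbpt.1⟩
    have hle : η i ≤ bndT := by
      rw [hbndT, dif_pos ⟨η i, hηmem i⟩]
      exact Finset.le_max' _ _ (hηmem i)
    linarith [hbpt.2]
  obtain ⟨bpt, hbpt_gt, hbpt_pos⟩ := htop
  have hbot : ∃ apt : ℝ, (∀ i : Fin m, apt < η i) ∧
      0 < (-1 : ℝ) ^ (m + 1) * Gp.eval apt ∧ apt < bpt := by
    set Gq : Polynomial ℝ := C ((-1 : ℝ) ^ (m + 1)) * (Gp.comp (-X)) with hGqdef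
    have hcompne : ((-X : Polynomial ℝ)).natDegree ≠ 0 := by
      rw [natDegree_neg, natDegree_X]
      norm_num
    have hGq_lc : Gq.leadingCoeff = 1 := by
      rw [hGqdef, leadingCoeff_mul, leadingCoeff_C, leadingCoeff_comp hcompne,
        Monic.leadingCoeff hGp_monic, leadingCoeff_neg, leadingCoeff_X, hGp_deg]
      rw [one_mul, ← pow_add, ← two_mul, pow_mul]
      norm_num
    have hGq_deg : 0 < Gq.degree := by
      have hne : Gq ≠ 0 := fun hh => by simp [hh] at hGq_lc
      rw [Polynomial.degree_eq_natDegree hne, hGqdef]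
      rw [natDegree_C_mul (by positivity : ((-1 : ℝ) ^ (m + 1)) ≠ 0)]
      rw [natDegree_comp, hGp_deg, natDegree_neg, natDegree_X, mul_one]
      exact_mod_cast Nat.succ_pos m
    have htt := Polynomial.tendsto_atTop_of_leadingCoeff_nonneg Gq hGq_deg
      (by rw [hGq_lc]; norm_num)
    have h1 := htt.eventually_gt_atTop 0
    set bndB : ℝ := if h : Θ.Nonempty then Θ.min' h else 0 with hbndB
    have h2 := Filter.eventually_gt_atTop (-bndB)
    have h3 := Filter.eventually_gt_atTop (-bpt)
    obtain ⟨xx, hxx⟩ := ((h1.and h2).and h3).exists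
    refine ⟨-xx, fun i => ?_, ?_, ?_⟩
    · have hge : bndB ≤ η i := by
        rw [hbndB, dif_pos ⟨η i, hηmem i⟩]
        exact Finset.min'_le _ _ (hηmem i)
      have := hxx.1.2
      linarith
    · have h0 := hxx.1.1
      rw [hGqdef, eval_mul, eval_C, eval_comp, eval_neg, eval_X] at h0
      exact h0
    · have := hxx.2
      linarith
  obtain ⟨apt, hapt_lt, hapt_sign, hapt_bpt⟩ := hbot
  -- interval endpoints
  set lo : Fin (m + 1) → ℝ := fun j =>
    if h : (j : ℕ) = 0 then apt else η ⟨(j : ℕ) - 1, by have := j.isLt; omega⟩ with hlodef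
  set hi : Fin (m + 1) → ℝ := fun j =>
    if h : (j : ℕ) = m then bpt else η ⟨(j : ℕ), by have := j.isLt; omega⟩ with hhidef
  have hlo_lt_hi : ∀ j, lo j < hi j := by
    intro j
    rw [hlodef, hhidef]
    simp only
    by_cases h0 : (j : ℕ) = 0 <;> by_cases hm : (j : ℕ) = m
    · rw [dif_pos h0, dif_pos hm]; exact hapt_bpt
    · rw [dif_pos h0, dif_neg hm]; exact hapt_lt _
    · rw [dif_neg h0, dif_pos hm]; exact hbpt_gt _
    · rw [dif_neg h0, dif_neg hm]
      apply hηmono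
      rw [Fin.lt_def]
      simp only
      omega
  have hsign_lo : ∀ j : Fin (m + 1), 0 < (-1 : ℝ) ^ (m + 1 - (j : ℕ)) * Gp.eval (lo j) := by
    intro j
    rw [hlodef]
    simp only
    by_cases h0 : (j : ℕ) = 0
    · rw [dif_pos h0]
      have hexp : m + 1 - (j : ℕ) = m + 1 := by omega
      rw [hexp]
      exact hapt_sign
    · rw [dif_neg h0]
      have := hsign_η ⟨(j : ℕ) - 1, by have := j.isLt; omega⟩
      have hexp : m - ((⟨(j : ℕ) - 1, by have := j.isLt; omega⟩ : Fin m) : ℕ)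
          = m + 1 - (j : ℕ) := by
        simp only
        have := j.isLt
        omega
      rwa [hexp] at this
  have hsign_hi : ∀ j : Fin (m + 1), 0 < (-1 : ℝ) ^ (m - (j : ℕ)) * Gp.eval (hi j) := by
    intro j
    rw [hhidef]
    simp only
    by_cases hm : (j : ℕ) = m
    · rw [dif_pos hm]
      have hexp : m - (j : ℕ) = 0 := by omega
      rw [hexp, pow_zero, one_mul]
      exact hbpt_pos
    · rw [dif_neg hm]
      exact hsign_η ⟨(j : ℕ), by have := j.isLt; omega⟩
  -- roots in each interval
  have hroots : ∀ j : Fin (m + 1), ∃ x, x ∈ Set.Ioo (lo j) (hi j) ∧ Gp.IsRoot x := by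
    intro j
    have hA := hsign_lo j
    have hB := hsign_hi j
    have hprodneg : Gp.eval (lo j) * Gp.eval (hi j) < 0 := by
      have hmul := mul_pos hA hB
      have hsgn : (-1 : ℝ) ^ (m + 1 - (j : ℕ)) * (-1 : ℝ) ^ (m - (j : ℕ)) = -1 := by
        rw [← pow_add]
        have hexp : (m + 1 - (j : ℕ)) + (m - (j : ℕ)) = 2 * (m - (j : ℕ)) + 1 := by
          have := j.isLt
          omega
        rw [hexp, pow_succ, pow_mul]
        norm_num
      nlinarith [hmul, hsgn]
    have hcont : ContinuousOn (fun x => Gp.eval x) (Set.Icc (lo j) (hi j)) :=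
      (Polynomial.continuous Gp).continuousOn
    rcases mul_neg_iff.mp hprodneg with ⟨hp1, hp2⟩ | ⟨hp1, hp2⟩
    · -- f lo > 0 > f hi : decreasing
      have := intermediate_value_Ioo' (le_of_lt (hlo_lt_hi j)) hcont
      have h0mem : (0 : ℝ) ∈ Set.Ioo (Gp.eval (hi j)) (Gp.eval (lo j)) :=
        Set.mem_Ioo.mpr ⟨hp2, hp1⟩
      obtain ⟨x, hxmem, hxeq⟩ := this h0mem
      exact ⟨x, hxmem, hxeq⟩
    · have := intermediate_value_Ioo (le_of_lt (hlo_lt_hi j)) hcont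
      have h0mem : (0 : ℝ) ∈ Set.Ioo (Gp.eval (lo j)) (Gp.eval (hi j)) :=
        Set.mem_Ioo.mpr ⟨hp1, hp2⟩
      obtain ⟨x, hxmem, hxeq⟩ := this h0mem
      exact ⟨x, hxmem, hxeq⟩
  choose ξ hξIoo hξroot using hroots
  have hξmono : StrictMono ξ := by
    rw [Fin.strictMono_iff_lt_succ]
    intro i
    have h1 : ξ i.castSucc < hi i.castSucc := (hξIoo i.castSucc).2
    have h2 : lo i.succ < ξ i.succ := (hξIoo i.succ).1
    have heq : hi i.castSucc = lo i.succ := by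
      rw [hhidef, hlodef]
      simp only
      have hilt := i.isLt
      rw [dif_neg (show ¬((i.castSucc : ℕ) = m) from by simp only [Fin.coe_castSucc]; omega)]
      rw [dif_neg (show ¬((i.succ : ℕ) = 0) from by simp only [Fin.val_succ]; omega)]
      congr 1
    linarith
  set Ξ : Finset ℝ := Finset.image ξ Finset.univ with hΞdef
  have hΞcard : Ξ.card = m + 1 := by
    rw [hΞdef, Finset.card_image_of_injective _ hξmono.injective, Finset.card_univ,
      Fintype.card_fin]
  have hGp_eq : Gp = ∏ t ∈ Ξ, (X - C t) := by
    obtain ⟨r, hr⟩ := prod_X_sub_C_dvd_of_isRoot Ξ Gp (by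
      intro t ht
      obtain ⟨j, _, rfl⟩ := Finset.mem_image.mp ht
      exact hξroot j)
    have hrmonic : r.Monic := Monic.of_mul_monic_left (hprod_monic Ξ) (hr ▸ hGp_monic)
    have hrdeg : r.natDegree = 0 := by
      have hdg := congrArg natDegree hr
      rw [natDegree_mul (hprod_monic Ξ).ne_zero hrmonic.ne_zero, hprod_deg, hΞcard,
        hGp_deg] at hdg
      omega
    rw [hr, (Monic.natDegree_eq_zero hrmonic).mp hrdeg, mul_one]
  -- relative position of the new roots
  have hξη : ∀ (j : Fin (m + 1)) (i : Fin m), ξ j < η i ↔ (j : ℕ) ≤ (i : ℕ) := by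
    intro j i
    constructor
    · intro hlt
      by_contra hcon
      push_neg at hcon
      have hj0 : (j : ℕ) ≠ 0 := by omega
      have hle : η i ≤ lo j := by
        rw [hlodef]
        simp only
        rw [dif_neg hj0]
        apply hηmono.monotone
        rw [Fin.le_def]
        simp only
        omega
      have := (hξIoo j).1
      linarith
    · intro hle
      have hjm : (j : ℕ) ≠ m := by have := i.isLt; omega
      have hge : hi j ≤ η i := by
        rw [hhidef]
        simp only
        rw [dif_neg hjm]
        apply hηmono.monotone
        rw [Fin.le_def]
        simp only
        omega
      have := (hξIoo j).2
      linarith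
  have hηξ : ∀ (j : Fin (m + 1)) (i : Fin m), η i < ξ j ↔ (i : ℕ) < (j : ℕ) := by
    intro j i
    constructor
    · intro hlt
      by_contra hcon
      push_neg at hcon
      have := (hξη j i).mpr hcon
      linarith
    · intro hlt
      have hj0 : (j : ℕ) ≠ 0 := by omega
      have hle : η i ≤ lo j := by
        rw [hlodef]
        simp only
        rw [dif_neg hj0]
        apply hηmono.monotone
        rw [Fin.le_def]
        simp only
        omega
      have := (hξIoo j).1
      linarith
  have hξnotΘ : ∀ j, ξ j ∉ Θ := by
    intro j hmem
    obtain ⟨i, hieq⟩ := hηsurj _ hmem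
    by_cases hle : (j : ℕ) ≤ (i : ℕ)
    · have := (hξη j i).mpr hle
      rw [hieq] at this
      exact lt_irrefl _ this
    · have := (hηξ j i).mpr (by omega)
      rw [hieq] at this
      exact lt_irrefl _ this
  -- counting elements above each new root
  have hcntΘ : ∀ j : Fin (m + 1), (Θ.filter (fun t => ξ j < t)).card = m - (j : ℕ) := by
    intro j
    have himg : Θ.filter (fun t => ξ j < t)
        = Finset.image η (Finset.univ.filter (fun i : Fin m => (j : ℕ) ≤ (i : ℕ))) := by
      ext t
      simp only [Finset.mem_filter, Finset.mem_image, Finset.mem_univ, true_and]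
      constructor
      · rintro ⟨ht, hlt⟩
        obtain ⟨i, rfl⟩ := hηsurj t ht
        exact ⟨i, (hξη j i).mp hlt, rfl⟩
      · rintro ⟨i, hji, rfl⟩
        exact ⟨hηmem i, (hξη j i).mpr hji⟩
    rw [himg, Finset.card_image_of_injective _ hηmono.injective, hfincard m (j : ℕ)]
  have hcntΞ : ∀ j : Fin (m + 1),
      ((Ξ.erase (ξ j)).filter (fun t => ξ j < t)).card = m - (j : ℕ) := by
    intro j
    have himg : (Ξ.erase (ξ j)).filter (fun t => ξ j < t)
        = Finset.image ξ (Finset.univ.filter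
            (fun i : Fin (m + 1) => (j : ℕ) + 1 ≤ (i : ℕ))) := by
      ext t
      simp only [Finset.mem_filter, Finset.mem_erase, Finset.mem_image, Finset.mem_univ,
        true_and]
      constructor
      · rintro ⟨⟨hne, ht⟩, hlt⟩
        rw [hΞdef] at ht
        obtain ⟨i, _, rfl⟩ := Finset.mem_image.mp ht
        have : j < i := hξmono.lt_iff_lt.mp hlt
        exact ⟨i, by omega, rfl⟩
      · rintro ⟨i, hji, rfl⟩
        have hlt : ξ j < ξ i := hξmono (by rw [Fin.lt_def]; omega)
        refine ⟨⟨ne_of_gt hlt, ?_⟩, hlt⟩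
        rw [hΞdef]
        exact Finset.mem_image_of_mem _ (Finset.mem_univ _)
    rw [himg, Finset.card_image_of_injective _ hξmono.injective,
      hfincard (m + 1) ((j : ℕ) + 1)]
    omega
  -- the new residues
  set d : ℝ → ℝ := fun t => (∏ θ ∈ Θ, (t - θ)) / (∏ t' ∈ Ξ.erase t, (t - t')) with hddef
  have hden_ne : ∀ t ∈ Ξ, (∏ t' ∈ Ξ.erase t, (t - t')) ≠ 0 := by
    intro t _
    exact Finset.prod_ne_zero_iff.mpr
      (fun t' ht' => sub_ne_zero.mpr (fun he => (Finset.mem_erase.mp ht').1 he.symm))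
  have hdpos : ∀ t ∈ Ξ, 0 < d t := by
    intro t ht
    obtain ⟨j, _, rfl⟩ := Finset.mem_image.mp ht
    have hnum := sign_prod_sub Θ (ξ j) (hξnotΘ j)
    have hden := sign_prod_sub (Ξ.erase (ξ j)) (ξ j) (Finset.notMem_erase _ _)
    rw [hcntΘ j] at hnum
    rw [hcntΞ j] at hden
    have hmul := mul_pos hnum hden
    have hsq : ((-1 : ℝ) ^ (m - (j : ℕ)) * ∏ θ ∈ Θ, (ξ j - θ))
        * ((-1 : ℝ) ^ (m - (j : ℕ)) * ∏ t' ∈ (Ξ.erase (ξ j)), (ξ j - t'))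
        = (∏ θ ∈ Θ, (ξ j - θ)) * ∏ t' ∈ (Ξ.erase (ξ j)), (ξ j - t') := by
      have h1 : ((-1 : ℝ) ^ (m - (j : ℕ))) * ((-1 : ℝ) ^ (m - (j : ℕ))) = 1 := by
        rw [← pow_add, ← two_mul, pow_mul]
        norm_num
      nlinarith [h1]
    rw [hsq] at hmul
    rw [hddef]
    simp only
    exact div_pos_iff.mpr (mul_pos_iff.mp hmul)
  -- the interpolation identity
  have hinterp : ∏ θ ∈ Θ, (X - C θ) = ∑ t ∈ Ξ, C (d t) * ∏ t' ∈ Ξ.erase t, (X - C t') := by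
    have hzero : (∏ θ ∈ Θ, (X - C θ))
        - (∑ t ∈ Ξ, C (d t) * ∏ t' ∈ Ξ.erase t, (X - C t')) = 0 := by
      apply Polynomial.eq_zero_of_natDegree_lt_card_of_eval_eq_zero' _ Ξ
      · intro t ht
        rw [eval_sub, eval_prod, eval_finset_sum]
        have hs : ∑ u ∈ Ξ, (C (d u) * ∏ t' ∈ Ξ.erase u, (X - C t')).eval t
            = d t * ∏ t' ∈ Ξ.erase t, (t - t') := by
          rw [Finset.sum_eq_single t]
          · simp [eval_prod]
          · intro u hu hne
            rw [eval_mul, eval_prod]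
            rw [Finset.prod_eq_zero (Finset.mem_erase.mpr ⟨fun hh => hne hh.symm, ht⟩)
              (by simp), mul_zero]
          · intro hcon
            exact absurd ht hcon
        rw [hs, hddef]
        simp only
        rw [div_mul_cancel₀ _ (hden_ne t ht)]
        simp
      · have h2 : (∑ t ∈ Ξ, C (d t) * ∏ t' ∈ Ξ.erase t, (X - C t')).natDegree ≤ m := by
          apply Polynomial.natDegree_sum_le_of_forall_le
          intro t ht
          apply le_trans (Polynomial.natDegree_C_mul_le _ _)
          rw [hprod_deg, Finset.card_erase_of_mem ht, hΞcard]
          omega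
        calc ((∏ θ ∈ Θ, (X - C θ))
              - ∑ t ∈ Ξ, C (d t) * ∏ t' ∈ Ξ.erase t, (X - C t')).natDegree
            ≤ max (∏ θ ∈ Θ, (X - C θ)).natDegree
                (∑ t ∈ Ξ, C (d t) * ∏ t' ∈ Ξ.erase t, (X - C t')).natDegree :=
              Polynomial.natDegree_sub_le _ _
          _ ≤ m := by
              rw [hprod_deg]
              omega
          _ < Ξ.card := by
              rw [hΞcard]
              omega
    have := sub_eq_zero.mp hzero
    exact this
  exact ⟨Ξ, d, hΞcard, hdpos, hGp_eq, hinterp⟩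

end PolyAux

section Graph

variable [Fintype V] [DecidableEq V] (G : SimpleGraph V) [DecidableRel G.Adj]

/-- Edges of `G` with both endpoints in `s`. -/
def edgesIn (s : Finset V) : Finset (Sym2 V) :=
  G.edgeFinset.filter (fun e => ∀ x : V, x ∈ e → x ∈ s)

/-- Matchings of the induced subgraph on `s`. -/
def matchingsOn (s : Finset V) : Finset (Finset (Sym2 V)) :=
  (edgesIn G s).powerset.filter
    (fun M => ∀ e ∈ M, ∀ f ∈ M, e ≠ f → ∀ w : V, w ∈ e → w ∉ f)

/-- The Laplacian matching polynomial of the induced subgraph on `s`,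
with weights the degrees in `G`. -/
noncomputable def Q (s : Finset V) : Polynomial ℝ :=
  ∑ M ∈ matchingsOn G s, (-1 : Polynomial ℝ) ^ M.card *
    ∏ v ∈ s \ covered M, (X - C (G.degree v : ℝ))

lemma edgesIn_empty : edgesIn G ∅ = ∅ := by
  ext e
  simp only [edgesIn, Finset.mem_filter, Finset.notMem_empty, iff_false, not_and]
  intro _
  induction e with
  | _ a b => exact fun hall => (hall a (Sym2.mem_mk_left a b))

lemma Q_empty : Q G ∅ = 1 := by
  have h1 : matchingsOn G ∅ = {∅} := by
    rw [matchingsOn, edgesIn_empty]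
    ext M
    simp only [Finset.mem_filter, Finset.mem_powerset, Finset.subset_empty,
      Finset.mem_singleton]
    constructor
    · rintro ⟨h, _⟩; exact h
    · rintro rfl
      exact ⟨rfl, by simp⟩
  rw [Q, h1]
  simp

lemma lapMatch_eq_Q : lapMatch G = Q G Finset.univ := by
  have h1 : edgesIn G Finset.univ = G.edgeFinset := by
    rw [edgesIn]
    exact Finset.filter_true_of_mem (fun e _ => fun x _ => Finset.mem_univ x)
  have h2 : matchingsOn G Finset.univ = matchings G := by
    rw [matchingsOn, h1, matchings]
  rw [lapMatch, Q, h2]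

lemma mem_matchingsOn {s : Finset V} {M : Finset (Sym2 V)} :
    M ∈ matchingsOn G s ↔
      (∀ e ∈ M, e ∈ G.edgeFinset ∧ ∀ x : V, x ∈ e → x ∈ s) ∧
      (∀ e ∈ M, ∀ f ∈ M, e ≠ f → ∀ w : V, w ∈ e → w ∉ f) := by
  simp only [matchingsOn, Finset.mem_filter, Finset.mem_powerset, Finset.subset_iff, edgesIn,
    Finset.mem_filter]

lemma mem_covered {M : Finset (Sym2 V)} {x : V} :
    x ∈ covered M ↔ ∃ e ∈ M, x ∈ e := by
  simp [covered]

lemma insert_mem_matchingsOn {s : Finset V} {v u : V} (hadj : G.Adj v u) (hvs : v ∈ s)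
    (hus : u ∈ s) {M' : Finset (Sym2 V)}
    (hM' : M' ∈ matchingsOn G ((s.erase v).erase u)) :
    insert s(v, u) M' ∈ matchingsOn G s := by
  rw [mem_matchingsOn] at hM' ⊢
  obtain ⟨hM'e, hM'm⟩ := hM'
  have hnotin : ∀ e ∈ M', ∀ x : V, x ∈ e → x ≠ v ∧ x ≠ u := by
    intro e he x hxe
    have := (hM'e e he).2 x hxe
    rw [Finset.mem_erase, Finset.mem_erase] at this
    exact ⟨this.2.1, this.1⟩
  constructor
  · intro e he
    rcases Finset.mem_insert.mp he with rfl | he'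
    · refine ⟨?_, ?_⟩
      · rw [SimpleGraph.mem_edgeFinset]
        exact hadj
      · intro x hxe
        rcases Sym2.mem_iff.mp hxe with rfl | rfl
        · exact hvs
        · exact hus
    · refine ⟨(hM'e e he').1, fun x hxe => ?_⟩
      have := (hM'e e he').2 x hxe
      rw [Finset.mem_erase, Finset.mem_erase] at this
      exact this.2.2
  · intro e he f hf hef w hwe hwf
    rcases Finset.mem_insert.mp he with rfl | he' <;>
      rcases Finset.mem_insert.mp hf with rfl | hf'
    · exact hef rfl
    · rcases Sym2.mem_iff.mp hwe with rfl | rfl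
      · exact (hnotin f hf' w hwf).1 rfl
      · exact (hnotin f hf' w hwf).2 rfl
    · rcases Sym2.mem_iff.mp hwf with rfl | rfl
      · exact (hnotin e he' w hwe).1 rfl
      · exact (hnotin e he' w hwe).2 rfl
    · exact hM'm e he' f hf' hef w hwe hwf

lemma edge_not_mem_matchingsOn {s : Finset V} {v u : V} {M' : Finset (Sym2 V)}
    (hM' : M' ∈ matchingsOn G ((s.erase v).erase u)) : s(v, u) ∉ M' := by
  intro hmem
  have := ((mem_matchingsOn G).mp hM').1 _ hmem
  have hv' := this.2 v (Sym2.mem_mk_left v u)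
  rw [Finset.mem_erase, Finset.mem_erase] at hv'
  exact hv'.2.1 rfl

/-- Deletion recurrence for `Q`. -/
lemma Q_rec (s : Finset V) (v : V) (hv : v ∈ s) :
    Q G s = (X - C (G.degree v : ℝ)) * Q G (s.erase v)
      - ∑ u ∈ s.filter (G.Adj v), Q G ((s.erase v).erase u) := by
  classical
  set s' := s.erase v with hs'
  set f : Finset (Sym2 V) → Polynomial ℝ :=
    fun M => (-1 : Polynomial ℝ) ^ M.card * ∏ x ∈ s \ covered M, (X - C (G.degree x : ℝ))
    with hfdef
  have hsplit : Q G s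
      = ∑ M ∈ (matchingsOn G s).filter (fun M => v ∈ covered M), f M
        + ∑ M ∈ (matchingsOn G s).filter (fun M => ¬ v ∈ covered M), f M :=
    (Finset.sum_filter_add_sum_filter_not _ _ _).symm
  -- the part where `v` is uncovered
  have huncov_set : (matchingsOn G s).filter (fun M => ¬ v ∈ covered M) = matchingsOn G s' := by
    ext M
    rw [Finset.mem_filter, mem_matchingsOn, mem_matchingsOn]
    constructor
    · rintro ⟨⟨hMe, hMm⟩, hnc⟩
      refine ⟨fun e he => ⟨(hMe e he).1, fun x hxe => ?_⟩, hMm⟩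
      rw [hs', Finset.mem_erase]
      refine ⟨fun hxv => hnc (mem_covered.mpr ⟨e, he, hxv ▸ hxe⟩), (hMe e he).2 x hxe⟩
    · rintro ⟨hMe, hMm⟩
      refine ⟨⟨fun e he => ⟨(hMe e he).1, fun x hxe =>
        Finset.mem_of_mem_erase ((hMe e he).2 x hxe)⟩, hMm⟩, fun hc => ?_⟩
      obtain ⟨e, he, hve⟩ := mem_covered.mp hc
      have := (hMe e he).2 v hve
      rw [hs', Finset.mem_erase] at this
      exact this.1 rfl
  have huncov : ∑ M ∈ (matchingsOn G s).filter (fun M => ¬ v ∈ covered M), f M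
      = (X - C (G.degree v : ℝ)) * Q G s' := by
    rw [huncov_set, Q, Finset.mul_sum]
    apply Finset.sum_congr rfl
    intro M hM
    have hvnc : v ∉ covered M := by
      intro hc
      obtain ⟨e, he, hve⟩ := mem_covered.mp hc
      have := (((mem_matchingsOn G).mp hM).1 e he).2 v hve
      rw [hs', Finset.mem_erase] at this
      exact this.1 rfl
    have hset : s \ covered M = insert v (s' \ covered M) := by
      ext x
      rw [Finset.mem_sdiff, Finset.mem_insert, Finset.mem_sdiff, hs', Finset.mem_erase]
      constructor
      · rintro ⟨hxs, hxc⟩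
        by_cases hxv : x = v
        · exact Or.inl hxv
        · exact Or.inr ⟨⟨hxv, hxs⟩, hxc⟩
      · rintro (rfl | ⟨⟨_, hxs⟩, hxc⟩)
        · exact ⟨hv, hvnc⟩
        · exact ⟨hxs, hxc⟩
    have hvnotin : v ∉ s' \ covered M := by
      rw [Finset.mem_sdiff, hs', Finset.mem_erase]
      rintro ⟨⟨hvv, _⟩, _⟩
      exact hvv rfl
    rw [hfdef]
    simp only
    rw [hset, Finset.prod_insert hvnotin]
    ring
  -- the part where `v` is covered
  have hbij : (matchingsOn G s).filter (fun M => v ∈ covered M)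
      = (s.filter (G.Adj v)).biUnion
          (fun u => (matchingsOn G (s'.erase u)).image (fun M => insert s(v, u) M)) := by
    ext M
    rw [Finset.mem_filter, Finset.mem_biUnion]
    constructor
    · rintro ⟨hM, hc⟩
      obtain ⟨e, he, hve⟩ := mem_covered.mp hc
      obtain ⟨u, rfl⟩ := Sym2.mem_iff_exists.mp hve
      obtain ⟨hMe, hMm⟩ := (mem_matchingsOn G).mp hM
      have hadj : G.Adj v u := (G.mem_edgeSet).mp
        (SimpleGraph.mem_edgeFinset.mp (hMe _ he).1)
      have hus : u ∈ s := (hMe _ he).2 u (Sym2.mem_mk_right v u)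
      refine ⟨u, Finset.mem_filter.mpr ⟨hus, hadj⟩, ?_⟩
      rw [Finset.mem_image]
      refine ⟨M.erase s(v, u), ?_, Finset.insert_erase he⟩
      rw [mem_matchingsOn]
      constructor
      · intro g hg
        have hgM := Finset.mem_of_mem_erase hg
        have hgne : g ≠ s(v, u) := Finset.ne_of_mem_erase hg
        refine ⟨(hMe g hgM).1, fun x hxg => ?_⟩
        rw [Finset.mem_erase, hs', Finset.mem_erase]
        have hxv : x ≠ v := by
          intro rfl_eq
          exact hMm _ he g hgM (fun hh => hgne hh.symm) v hve (rfl_eq ▸ hxg)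
        have hxu : x ≠ u := by
          intro rfl_eq
          exact hMm _ he g hgM (fun hh => hgne hh.symm) u (Sym2.mem_mk_right v u)
            (rfl_eq ▸ hxg)
        exact ⟨hxu, hxv, (hMe g hgM).2 x hxg⟩
      · intro e1 h1 e2 h2
        exact hMm e1 (Finset.mem_of_mem_erase h1) e2 (Finset.mem_of_mem_erase h2)
    · rintro ⟨u, hu, hMmem⟩
      rw [Finset.mem_image] at hMmem
      obtain ⟨M', hM', rfl⟩ := hMmem
      obtain ⟨hus, hadj⟩ := Finset.mem_filter.mp hu
      refine ⟨insert_mem_matchingsOn G hadj hv hus hM', ?_⟩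
      exact mem_covered.mpr ⟨s(v, u), Finset.mem_insert_self _ _, Sym2.mem_mk_left v u⟩
  have hdisj : (↑(s.filter (G.Adj v)) : Set V).PairwiseDisjoint
      (fun u => (matchingsOn G (s'.erase u)).image (fun M => insert s(v, u) M)) := by
    intro u1 h1 u2 h2 hne
    rw [Finset.coe_filter] at h1 h2
    obtain ⟨h1s, h1adj⟩ := h1
    obtain ⟨h2s, h2adj⟩ := h2
    rw [Function.onFun, Finset.disjoint_left]
    intro M hM1 hM2
    rw [Finset.mem_image] at hM1 hM2
    obtain ⟨M1, hM1', rfl⟩ := hM1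
    obtain ⟨M2, hM2', hMeq⟩ := hM2
    have hMmem : insert s(v, u1) M1 ∈ matchingsOn G s :=
      insert_mem_matchingsOn G h1adj hv h1s hM1'
    have he1 : s(v, u1) ∈ insert s(v, u1) M1 := Finset.mem_insert_self _ _
    have he2 : s(v, u2) ∈ insert s(v, u1) M1 := by
      rw [← hMeq]; exact Finset.mem_insert_self _ _
    have hne' : s(v, u1) ≠ s(v, u2) := by
      intro heq
      have := Sym2.mem_iff.mp (heq ▸ Sym2.mem_mk_right v u1)
      rcases this with h | h
      · exact (G.ne_of_adj h1adj) h.symm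
      · exact hne h
    exact ((mem_matchingsOn G).mp hMmem).2 _ he1 _ he2 hne' v (Sym2.mem_mk_left v u1)
      (Sym2.mem_mk_left v u2)
  have hcov : ∑ M ∈ (matchingsOn G s).filter (fun M => v ∈ covered M), f M
      = - ∑ u ∈ s.filter (G.Adj v), Q G (s'.erase u) := by
    rw [hbij, Finset.sum_biUnion hdisj, ← Finset.sum_neg_distrib]
    apply Finset.sum_congr rfl
    intro u hu
    obtain ⟨hus, hadj⟩ := Finset.mem_filter.mp hu
    rw [Finset.sum_image (fun M1 h1 M2 h2 heq => by
      have h1' := edge_not_mem_matchingsOn G h1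
      have h2' := edge_not_mem_matchingsOn G h2
      rw [← Finset.erase_insert h1', heq, Finset.erase_insert h2'])]
    rw [Q, ← Finset.sum_neg_distrib]
    apply Finset.sum_congr rfl
    intro M' hM'
    have hnotmem : s(v, u) ∉ M' := edge_not_mem_matchingsOn G hM'
    have hcard : (insert s(v, u) M').card = M'.card + 1 :=
      Finset.card_insert_of_notMem hnotmem
    have hset : s \ covered (insert s(v, u) M') = (s'.erase u) \ covered M' := by
      ext x
      rw [Finset.mem_sdiff, Finset.mem_sdiff, Finset.mem_erase, hs', Finset.mem_erase]
      have hcov_ins : x ∈ covered (insert s(v, u) M') ↔ (x = v ∨ x = u) ∨ x ∈ covered M' := by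
        rw [mem_covered, mem_covered]
        constructor
        · rintro ⟨e, he, hxe⟩
          rcases Finset.mem_insert.mp he with rfl | he'
          · exact Or.inl (Sym2.mem_iff.mp hxe)
          · exact Or.inr ⟨e, he', hxe⟩
        · rintro ((rfl | rfl) | ⟨e, he, hxe⟩)
          · exact ⟨s(x, u), Finset.mem_insert_self _ _, Sym2.mem_mk_left x u⟩
          · exact ⟨s(v, x), Finset.mem_insert_self _ _, Sym2.mem_mk_right v x⟩
          · exact ⟨e, Finset.mem_insert_of_mem he, hxe⟩
      rw [hcov_ins]
      constructor
      · rintro ⟨hxs, hxc⟩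
        push_neg at hxc
        exact ⟨⟨hxc.1.2, hxc.1.1, hxs⟩, hxc.2⟩
      · rintro ⟨⟨hxu, hxv, hxs⟩, hxc⟩
        exact ⟨hxs, by push_neg; exact ⟨⟨hxv, hxu⟩, hxc⟩⟩
    rw [hfdef]
    simp only
    rw [hset, hcard, pow_succ]
    ring
  rw [hsplit, huncov, hcov]
  ring

/-- Positivity of `(-1)^|s| Q s` on negative reals, with a quantitative ratio bound. -/
lemma Q_eval_neg (x : ℝ) (hx : x < 0) (s : Finset V) :
    0 < (-1 : ℝ) ^ s.card * (Q G s).eval x ∧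
    ∀ v ∈ s, ((G.degree v : ℝ) - (s.filter (G.Adj v)).card - x) *
        ((-1 : ℝ) ^ (s.erase v).card * (Q G (s.erase v)).eval x)
      ≤ (-1 : ℝ) ^ s.card * (Q G s).eval x := by
  induction s using Finset.strongInduction with
  | _ s ih =>
  have key : ∀ v ∈ s, ((G.degree v : ℝ) - (s.filter (G.Adj v)).card - x) *
      ((-1 : ℝ) ^ (s.erase v).card * (Q G (s.erase v)).eval x)
      ≤ (-1 : ℝ) ^ s.card * (Q G s).eval x := by
    intro v hv
    set s' := s.erase v with hs'
    have hm : s'.card + 1 = s.card := Finset.card_erase_add_one hv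
    set m := s'.card with hmdef
    have ihs' := ih s' (Finset.erase_ssubset hv)
    have hrec := Q_rec G s v hv
    have heval : (Q G s).eval x = (x - (G.degree v : ℝ)) * (Q G s').eval x
        - ∑ u ∈ s.filter (G.Adj v), (Q G (s'.erase u)).eval x := by
      rw [hrec, ← hs']
      simp [eval_finset_sum]
    -- bound each term of the sum
    have hterm : ∀ u ∈ s.filter (G.Adj v),
        (-1 : ℝ) ^ (s'.erase u).card * (Q G (s'.erase u)).eval x
          ≤ (-1 : ℝ) ^ m * (Q G s').eval x := by
      intro u hu
      obtain ⟨hus, hadj⟩ := Finset.mem_filter.mp hu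
      have hu_s' : u ∈ s' := Finset.mem_erase.mpr ⟨(G.ne_of_adj hadj).symm, hus⟩
      have ihu := ih (s'.erase u)
        (Finset.ssubset_of_ssubset_of_subset (Finset.erase_ssubset hu_s') (Finset.erase_subset v s))
      have hPu_pos : 0 < (-1 : ℝ) ^ (s'.erase u).card * (Q G (s'.erase u)).eval x := ihu.1
      have hbound := ihs'.2 u hu_s'
      have hdeg : ((s'.filter (G.Adj u)).card : ℝ) + 1 ≤ (G.degree u : ℝ) := by
        have hsub : insert v (s'.filter (G.Adj u)) ⊆ G.neighborFinset u := by
          intro y hy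
          rcases Finset.mem_insert.mp hy with rfl | hy'
          · exact (SimpleGraph.mem_neighborFinset G u y).mpr hadj.symm
          · exact (SimpleGraph.mem_neighborFinset G u y).mpr (Finset.mem_filter.mp hy').2
        have hvnot : v ∉ s'.filter (G.Adj u) := by
          intro hc
          exact (Finset.mem_erase.mp (Finset.mem_filter.mp hc).1).1 rfl
        have := Finset.card_le_card hsub
        rw [Finset.card_insert_of_notMem hvnot] at this
        rw [SimpleGraph.degree]
        exact_mod_cast this
      have hc1 : (1 : ℝ) ≤ (G.degree u : ℝ) - ((s'.filter (G.Adj u)).card : ℝ) - x := by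
        linarith
      calc (-1 : ℝ) ^ (s'.erase u).card * (Q G (s'.erase u)).eval x
          = 1 * ((-1 : ℝ) ^ (s'.erase u).card * (Q G (s'.erase u)).eval x) := (one_mul _).symm
        _ ≤ ((G.degree u : ℝ) - ((s'.filter (G.Adj u)).card : ℝ) - x) *
              ((-1 : ℝ) ^ (s'.erase u).card * (Q G (s'.erase u)).eval x) :=
            mul_le_mul_of_nonneg_right hc1 hPu_pos.le
        _ ≤ (-1 : ℝ) ^ m * (Q G s').eval x := hbound
    -- assemble
    have hsign : ∀ u ∈ s.filter (G.Adj v),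
        (-1 : ℝ) ^ s.card * (Q G (s'.erase u)).eval x
          = (-1 : ℝ) ^ (s'.erase u).card * (Q G (s'.erase u)).eval x := by
      intro u hu
      obtain ⟨hus, hadj⟩ := Finset.mem_filter.mp hu
      have hu_s' : u ∈ s' := Finset.mem_erase.mpr ⟨(G.ne_of_adj hadj).symm, hus⟩
      have hcu : (s'.erase u).card + 1 = m := Finset.card_erase_add_one hu_s'
      have : s.card = (s'.erase u).card + 2 := by omega
      rw [this, pow_add]
      norm_num
    have hmain : (-1 : ℝ) ^ s.card * (Q G s).eval x
        = ((G.degree v : ℝ) - x) * ((-1 : ℝ) ^ m * (Q G s').eval x)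
          - ∑ u ∈ s.filter (G.Adj v),
              (-1 : ℝ) ^ (s'.erase u).card * (Q G (s'.erase u)).eval x := by
      rw [heval, mul_sub, Finset.mul_sum, Finset.sum_congr rfl hsign]
      have hcard : s.card = m + 1 := hm.symm
      rw [hcard, pow_succ]
      ring
    have hsum_le : ∑ u ∈ s.filter (G.Adj v),
        (-1 : ℝ) ^ (s'.erase u).card * (Q G (s'.erase u)).eval x
        ≤ ((s.filter (G.Adj v)).card : ℝ) * ((-1 : ℝ) ^ m * (Q G s').eval x) := by
      calc _ ≤ ∑ _u ∈ s.filter (G.Adj v), (-1 : ℝ) ^ m * (Q G s').eval x :=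
            Finset.sum_le_sum hterm
        _ = ((s.filter (G.Adj v)).card : ℝ) * ((-1 : ℝ) ^ m * (Q G s').eval x) := by
            rw [Finset.sum_const, nsmul_eq_mul]
    have hP'pos : 0 < (-1 : ℝ) ^ m * (Q G s').eval x := ihs'.1
    rw [hmain]
    have expand : ((G.degree v : ℝ) - (s.filter (G.Adj v)).card - x) *
        ((-1 : ℝ) ^ m * (Q G s').eval x)
        = ((G.degree v : ℝ) - x) * ((-1 : ℝ) ^ m * (Q G s').eval x)
          - ((s.filter (G.Adj v)).card : ℝ) * ((-1 : ℝ) ^ m * (Q G s').eval x) := by ring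
    rw [expand]
    linarith
  constructor
  · rcases Finset.eq_empty_or_nonempty s with rfl | ⟨v, hv⟩
    · rw [Q_empty]
      norm_num
    · have hwv : ((s.filter (G.Adj v)).card : ℝ) ≤ (G.degree v : ℝ) := by
        have hsub : s.filter (G.Adj v) ⊆ G.neighborFinset v := by
          intro y hy
          exact (SimpleGraph.mem_neighborFinset G v y).mpr (Finset.mem_filter.mp hy).2
        rw [SimpleGraph.degree]
        exact_mod_cast Finset.card_le_card hsub
      have hP'pos : 0 < (-1 : ℝ) ^ (s.erase v).card * (Q G (s.erase v)).eval x :=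
        (ih (s.erase v) (Finset.erase_ssubset hv)).1
      have hfac : 0 < (G.degree v : ℝ) - (s.filter (G.Adj v)).card - x := by linarith
      exact lt_of_lt_of_le (mul_pos hfac hP'pos) (key v hv)
  · exact key

lemma Q_ne_zero (s : Finset V) : Q G s ≠ 0 := by
  intro h
  have := (Q_eval_neg G (-1) (by norm_num) s).1
  rw [h] at this
  simp at this

/-- A partial-fraction representation of `Q (s \ v) / Q s`. -/
def Rep (s : Finset V) (v : V) (h : Polynomial ℝ) (Θ : Finset ℝ) (c : ℝ → ℝ) : Prop :=
  (∀ θ ∈ Θ, 0 < c θ) ∧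
  Q G s = h * ∏ θ ∈ Θ, (X - C θ) ∧
  Q G (s.erase v) = h * ∑ θ ∈ Θ, C (c θ) * ∏ θ' ∈ Θ.erase θ, (X - C θ')

lemma rep_theta_unique {s : Finset V} {v : V} {h h' : Polynomial ℝ} {Θ Θ' : Finset ℝ}
    {c c' : ℝ → ℝ} (H : Rep G s v h Θ c) (H' : Rep G s v h' Θ' c') : Θ = Θ' := by
  classical
  obtain ⟨hc, hQ, hQ'⟩ := H
  obtain ⟨hc', hR, hR'⟩ := H'
  have hh : h ≠ 0 := by
    intro h0
    exact Q_ne_zero G s (by rw [hQ, h0, zero_mul])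
  have hh' : h' ≠ 0 := by
    intro h0
    exact Q_ne_zero G s (by rw [hR, h0, zero_mul])
  have hid : (∏ θ ∈ Θ, (X - C θ)) * (∑ θ ∈ Θ', C (c' θ) * ∏ t ∈ Θ'.erase θ, (X - C t))
      = (∏ θ ∈ Θ', (X - C θ)) * (∑ θ ∈ Θ, C (c θ) * ∏ t ∈ Θ.erase θ, (X - C t)) := by
    have e1 : (h * ∏ θ ∈ Θ, (X - C θ)) * (h' * ∑ θ ∈ Θ', C (c' θ) * ∏ t ∈ Θ'.erase θ, (X - C t))
        = (h' * ∏ θ ∈ Θ', (X - C θ)) * (h * ∑ θ ∈ Θ, C (c θ) * ∏ t ∈ Θ.erase θ, (X - C t)) := by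
      rw [← hQ, ← hQ', ← hR, ← hR']
    have e2 : (h * h') * ((∏ θ ∈ Θ, (X - C θ)) *
          (∑ θ ∈ Θ', C (c' θ) * ∏ t ∈ Θ'.erase θ, (X - C t)))
        = (h * h') * ((∏ θ ∈ Θ', (X - C θ)) *
          (∑ θ ∈ Θ, C (c θ) * ∏ t ∈ Θ.erase θ, (X - C t))) := by
      rw [show (h * h') * ((∏ θ ∈ Θ, (X - C θ)) *
          (∑ θ ∈ Θ', C (c' θ) * ∏ t ∈ Θ'.erase θ, (X - C t)))
        = (h * ∏ θ ∈ Θ, (X - C θ)) * (h' * ∑ θ ∈ Θ', C (c' θ) * ∏ t ∈ Θ'.erase θ, (X - C t))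
        from by ring, e1]
      ring
    exact mul_left_cancel₀ (mul_ne_zero hh hh') e2
  have incl : ∀ (A B : Finset ℝ) (ca cb : ℝ → ℝ), (∀ θ ∈ B, 0 < cb θ) →
      (∏ θ ∈ A, (X - C θ)) * (∑ θ ∈ B, C (cb θ) * ∏ t ∈ B.erase θ, (X - C t))
        = (∏ θ ∈ B, (X - C θ)) * (∑ θ ∈ A, C (ca θ) * ∏ t ∈ A.erase θ, (X - C t)) →
      B ⊆ A := by
    intro A B ca cb hcb hideq θ₀ hθ₀
    by_contra hnot
    have := congrArg (Polynomial.eval θ₀) hideq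
    rw [eval_mul, eval_mul] at this
    have hRHS : (∏ θ ∈ B, (X - C θ)).eval θ₀ = 0 := by
      rw [eval_prod]
      exact Finset.prod_eq_zero hθ₀ (by simp)
    have hsum : (∑ θ ∈ B, C (cb θ) * ∏ t ∈ B.erase θ, (X - C t)).eval θ₀
        = cb θ₀ * ∏ t ∈ B.erase θ₀, (θ₀ - t) := by
      rw [eval_finset_sum]
      rw [Finset.sum_eq_single θ₀]
      · simp [eval_prod]
      · intro θ hθ hne
        rw [eval_mul, eval_prod]
        have : θ₀ ∈ B.erase θ := Finset.mem_erase.mpr ⟨fun hh0 => hne hh0.symm, hθ₀⟩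
        rw [Finset.prod_eq_zero this (by simp), mul_zero]
      · intro hcon
        exact absurd hθ₀ hcon
    have hprodA : (∏ θ ∈ A, (X - C θ)).eval θ₀ ≠ 0 := by
      rw [eval_prod]
      apply Finset.prod_ne_zero_iff.mpr
      intro θ hθ
      simp only [eval_sub, eval_X, eval_C]
      exact sub_ne_zero.mpr (fun hh0 => hnot (hh0 ▸ hθ))
    have hsumne : (∑ θ ∈ B, C (cb θ) * ∏ t ∈ B.erase θ, (X - C t)).eval θ₀ ≠ 0 := by
      rw [hsum]
      apply mul_ne_zero (ne_of_gt (hcb θ₀ hθ₀))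
      apply Finset.prod_ne_zero_iff.mpr
      intro t ht
      exact sub_ne_zero.mpr (fun hh0 => (Finset.mem_erase.mp ht).1 hh0.symm)
    exact (mul_ne_zero hprodA hsumne) (by rw [this, hRHS, zero_mul])
  have h1 : Θ' ⊆ Θ := incl Θ Θ' c c' hc' hid
  have h2 : Θ ⊆ Θ' := incl Θ' Θ c' c hc hid.symm
  exact Finset.Subset.antisymm h2 h1

lemma rep_exists : ∀ (s : Finset V) (v : V), v ∈ s →
    ∃ h Θ c, Rep G s v h Θ c ∧
      ∀ u, G.Adj v u → u ∈ s →
        ∀ h' Θ' c', Rep G (s.erase v) u h' Θ' c' → Θ'.card + 1 ≤ Θ.card := by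
  classical
  intro s
  induction s using Finset.strongInduction with
  | _ s ih =>
  intro v hv
  set s' := s.erase v with hs'def
  set nbrs := s.filter (G.Adj v) with hnbrsdef
  -- representations for the subgraphs at each neighbour
  have hrep_u : ∀ u : {x // x ∈ nbrs}, ∃ h Θ c, Rep G s' u.1 h Θ c := by
    intro ⟨u, hu⟩
    obtain ⟨hus, hadj⟩ := Finset.mem_filter.mp hu
    have hu_s' : u ∈ s' := Finset.mem_erase.mpr ⟨(G.ne_of_adj hadj).symm, hus⟩
    obtain ⟨h, Θ, c, hRep, _⟩ := ih s' (Finset.erase_ssubset hv) u hu_s'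
    exact ⟨h, Θ, c, hRep⟩
  choose hfun Θfun cfun hRepfun using hrep_u
  set ΘS : Finset ℝ := nbrs.attach.biUnion (fun u => Θfun u) with hΘSdef
  have hΘsub : ∀ u : {x // x ∈ nbrs}, Θfun u ⊆ ΘS := by
    intro u
    exact Finset.subset_biUnion_of_mem _ (Finset.mem_attach _ u)
  -- every element of ΘS is a root of Q s'
  have hroots : ∀ θ ∈ ΘS, (Q G s').IsRoot θ := by
    intro θ hθ
    obtain ⟨u, _, hθu⟩ := Finset.mem_biUnion.mp hθ
    have hQ := (hRepfun u).2.1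
    rw [IsRoot, hQ, eval_mul, eval_prod]
    rw [Finset.prod_eq_zero hθu (by simp), mul_zero]
  obtain ⟨hstar, hhs⟩ := prod_X_sub_C_dvd_of_isRoot ΘS (Q G s') hroots
  rw [mul_comm] at hhs
  -- relate each local representation to the global one
  have hprod_monic : ∀ S : Finset ℝ, (∏ t ∈ S, (X - C t)).Monic :=
    fun S => monic_prod_of_monic _ _ (fun t _ => monic_X_sub_C t)
  have hfun_eq : ∀ u : {x // x ∈ nbrs},
      hfun u = hstar * ∏ θ ∈ ΘS \ Θfun u, (X - C θ) := by
    intro u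
    have h1 : hfun u * ∏ θ ∈ Θfun u, (X - C θ)
        = (hstar * ∏ θ ∈ ΘS \ Θfun u, (X - C θ)) * ∏ θ ∈ Θfun u, (X - C θ) := by
      rw [← (hRepfun u).2.1, hhs, mul_assoc, Finset.prod_sdiff (hΘsub u)]
    exact mul_right_cancel₀ (hprod_monic (Θfun u)).ne_zero h1
  -- local coefficient functions, extended by zero
  set cc : {x // x ∈ nbrs} → ℝ → ℝ :=
    fun u θ => if θ ∈ Θfun u then cfun u θ else 0 with hccdef
  have herase_split : ∀ (u : {x // x ∈ nbrs}) (θ : ℝ), θ ∈ Θfun u →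
      (∏ t ∈ ΘS \ Θfun u, (X - C t)) * ∏ t ∈ (Θfun u).erase θ, (X - C t)
        = ∏ t ∈ ΘS.erase θ, (X - C t) := by
    intro u θ hθ
    rw [← Finset.prod_union (by
      rw [Finset.disjoint_left]
      intro t ht hterase
      exact (Finset.mem_sdiff.mp ht).2 (Finset.mem_of_mem_erase hterase))]
    apply Finset.prod_congr _ (fun _ _ => rfl)
    ext t
    simp only [Finset.mem_union, Finset.mem_sdiff, Finset.mem_erase]
    constructor
    · rintro (⟨htS, htu⟩ | ⟨htne, htu⟩)
      · exact ⟨fun he => htu (he ▸ hθ), htS⟩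
      · exact ⟨htne, hΘsub u htu⟩
    · rintro ⟨htne, htS⟩
      by_cases htu : t ∈ Θfun u
      · exact Or.inr ⟨htne, htu⟩
      · exact Or.inl ⟨htS, htu⟩
  have hQerase : ∀ u : {x // x ∈ nbrs},
      Q G (s'.erase u.1) = hstar * ∑ θ ∈ ΘS, C (cc u θ) * ∏ t ∈ ΘS.erase θ, (X - C t) := by
    intro u
    have h1 := (hRepfun u).2.2
    rw [hfun_eq u] at h1
    rw [h1, mul_assoc]
    congr 1
    rw [Finset.mul_sum]
    have h2 : ∀ θ ∈ Θfun u,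
        (∏ t ∈ ΘS \ Θfun u, (X - C t)) * (C (cfun u θ) * ∏ t ∈ (Θfun u).erase θ, (X - C t))
          = C (cc u θ) * ∏ t ∈ ΘS.erase θ, (X - C t) := by
      intro θ hθ
      rw [hccdef]
      simp only [if_pos hθ]
      rw [← herase_split u θ hθ]
      ring
    rw [Finset.sum_congr rfl h2]
    apply Finset.sum_subset (hΘsub u)
    intro θ _ hθu
    rw [hccdef]
    simp only [if_neg hθu]
    simp
  -- the combined coefficient function
  set CC : ℝ → ℝ := fun θ => ∑ u ∈ nbrs.attach, cc u θ with hCCdef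
  have hCCpos : ∀ θ ∈ ΘS, 0 < CC θ := by
    intro θ hθ
    obtain ⟨u, hu, hθu⟩ := Finset.mem_biUnion.mp hθ
    apply Finset.sum_pos' (fun x _ => by
      rw [hccdef]
      by_cases hx : θ ∈ Θfun x
      · simp only [if_pos hx]
        exact ((hRepfun x).1 θ hx).le
      · simp only [if_neg hx]
        exact le_refl 0) ⟨u, hu, by
      rw [hccdef]
      simp only [if_pos hθu]
      exact (hRepfun u).1 θ hθu⟩
  -- the recurrence in terms of the representation
  have hQs : Q G s = hstar * ((X - C (G.degree v : ℝ)) * ∏ θ ∈ ΘS, (X - C θ)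
      - ∑ θ ∈ ΘS, C (CC θ) * ∏ t ∈ ΘS.erase θ, (X - C t)) := by
    rw [Q_rec G s v hv, ← hs'def, ← hnbrsdef, hhs]
    rw [← Finset.sum_attach nbrs (fun u => Q G (s'.erase u))]
    rw [Finset.sum_congr rfl (fun u _ => hQerase u)]
    rw [← Finset.mul_sum]
    rw [mul_sub]
    congr 1
    · ring
    · congr 1
      rw [Finset.sum_comm]
      apply Finset.sum_congr rfl
      intro θ _
      rw [hCCdef]
      rw [← Finset.sum_mul, ← map_sum]
  -- apply the key lemma
  obtain ⟨Ξ, d, hΞcard, hdpos, hGpeq, hinterp⟩ := key ΘS CC hCCpos (G.degree v : ℝ)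
  refine ⟨hstar, Ξ, d, ⟨hdpos, ?_, ?_⟩, ?_⟩
  · rw [hQs, hGpeq]
  · rw [← hs'def, hhs, hinterp]
  · intro u hadj hus h' Θ' c' hrep'
    have hu : u ∈ nbrs := Finset.mem_filter.mpr ⟨hus, hadj⟩
    have hΘeq : Θfun ⟨u, hu⟩ = Θ' :=
      rep_theta_unique G (hRepfun ⟨u, hu⟩) hrep'
    have hsub := hΘsub ⟨u, hu⟩
    rw [hΘeq] at hsub
    have := Finset.card_le_card hsub
    omega

lemma rep_card_of_path : ∀ {a b : V} (p : G.Walk a b), p.IsPath → ∀ (s : Finset V),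
    (∀ x ∈ p.support, x ∈ s) → ∀ h Θ c, Rep G s a h Θ c → p.length + 1 ≤ Θ.card := by
  intro a b p
  induction p with
  | nil =>
    intro hp s hsup h Θ c hRep
    rw [SimpleGraph.Walk.length_nil]
    rcases Finset.eq_empty_or_nonempty Θ with rfl | hne
    · exfalso
      have h22 := hRep.2.2
      simp only [Finset.sum_empty, mul_zero] at h22
      exact Q_ne_zero G _ h22
    · have := Finset.card_pos.mpr hne
      omega
  | cons hadj q ihq =>
    rename_i x y z
    intro hp s hsup h Θ c hRep
    have hxs : x ∈ s := hsup x (SimpleGraph.Walk.start_mem_support _)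
    have hpath := (SimpleGraph.Walk.cons_isPath_iff _ _).mp hp
    obtain ⟨hqpath, hxnot⟩ := hpath
    have hys' : y ∈ s.erase x := by
      refine Finset.mem_erase.mpr ⟨?_, hsup y ?_⟩
      · intro hyx
        exact hxnot (hyx ▸ q.start_mem_support)
      · rw [SimpleGraph.Walk.support_cons]
        exact List.mem_cons_of_mem _ q.start_mem_support
    obtain ⟨h₀, Θ₀, c₀, hRep₀, hclause⟩ := rep_exists G s x hxs
    have hΘeq : Θ = Θ₀ := rep_theta_unique G hRep hRep₀
    obtain ⟨h₁, Θ₁, c₁, hRep₁, _⟩ := rep_exists G (s.erase x) y hys'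
    have hqsup : ∀ w ∈ q.support, w ∈ s.erase x := by
      intro w hw
      refine Finset.mem_erase.mpr ⟨fun hwx => hxnot (hwx ▸ hw), hsup w ?_⟩
      rw [SimpleGraph.Walk.support_cons]
      exact List.mem_cons_of_mem _ hw
    have hq := ihq hqpath (s.erase x) hqsup h₁ Θ₁ c₁ hRep₁
    have hstep := hclause y hadj (Finset.mem_of_mem_erase hys') h₁ Θ₁ c₁ hRep₁
    rw [SimpleGraph.Walk.length_cons, hΘeq]
    omega

end Graph

/-- For a finite connected graph `G`, the Laplacian matching polynomial
`𝓛𝓜(G, x)` has at least `ℓ(G)` distinct positive real roots, where `ℓ(G)` is the length of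
a longest path in `G`.  Equivalently (as stated here): for every path `p` of `G`, the number
of distinct positive real roots of `𝓛𝓜(G, x)` is at least the length of `p`. -/
theorem lapMatch_card_distinct_pos_roots [Fintype V] [DecidableEq V] (G : SimpleGraph V)
    [DecidableRel G.Adj] (hG : G.Connected) {a b : V} (p : G.Walk a b) (hp : p.IsPath) :
    p.length ≤ (((lapMatch G).roots.toFinset.filter (fun r => 0 < r)).card) := by
  classical
  obtain ⟨h, Θ, c, hRep, _⟩ := rep_exists G Finset.univ a (Finset.mem_univ a)
  have hlen := rep_card_of_path G p hp Finset.univ (fun x _ => Finset.mem_univ x) h Θ c hRep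
  have hQnz : Q G Finset.univ ≠ 0 := Q_ne_zero G _
  have hroot : ∀ θ ∈ Θ, (lapMatch G).IsRoot θ := by
    intro θ hθ
    rw [lapMatch_eq_Q, Polynomial.IsRoot, hRep.2.1, Polynomial.eval_mul,
      Polynomial.eval_prod, Finset.prod_eq_zero hθ (by simp), mul_zero]
  have hnonneg : ∀ θ ∈ Θ, 0 ≤ θ := by
    intro θ hθ
    by_contra hneg
    push_neg at hneg
    have hpos := (Q_eval_neg G θ hneg Finset.univ).1
    have hzero : (Q G Finset.univ).eval θ = 0 := by
      rw [← lapMatch_eq_Q]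
      exact hroot θ hθ
    rw [hzero, mul_zero] at hpos
    exact lt_irrefl 0 hpos
  have hsubset : Θ.filter (fun r => 0 < r)
      ⊆ (lapMatch G).roots.toFinset.filter (fun r => 0 < r) := by
    intro θ hθ
    obtain ⟨hθΘ, hposθ⟩ := Finset.mem_filter.mp hθ
    refine Finset.mem_filter.mpr ⟨?_, hposθ⟩
    rw [Multiset.mem_toFinset, Polynomial.mem_roots']
    exact ⟨by rw [lapMatch_eq_Q]; exact hQnz, hroot θ hθΘ⟩
  have hcard1 : Θ.card ≤ (Θ.filter (fun r => 0 < r)).card + 1 := by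
    have hsub : Θ.filter (fun r => ¬ 0 < r) ⊆ {0} := by
      intro θ hθ
      obtain ⟨hθΘ, hnpos⟩ := Finset.mem_filter.mp hθ
      rw [Finset.mem_singleton]
      have := hnonneg θ hθΘ
      push_neg at hnpos
      linarith
    have hsplit := Finset.card_filter_add_card_filter_not
      (s := Θ) (p := fun r => 0 < r)
    have hle := Finset.card_le_card hsub
    rw [Finset.card_singleton] at hle
    omega
  have hfin := Finset.card_le_card hsubset
  omega

end LM
end

section
/- Let G be a finite connected simple graph with |E(G)| ≥ |V(G)|. Then the subdivision S(G) contains a matching that saturates the set V(G), i.e., a matching M of S(G) such that every original vertex of G is covered by some edge of M. -/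
namespace LM

open Finset

variable {V : Type*}

/-- The relation underlying the subdivision of `G`: an original vertex `a` is joined to the
new vertex `v_e` of every edge `e` incident with `a`. -/
def sdRel (G : SimpleGraph V) (x y : V ⊕ G.edgeSet) : Prop :=
  ∃ (a : V) (e : G.edgeSet), x = Sum.inl a ∧ y = Sum.inr e ∧ a ∈ (e : Sym2 V)

instance [Fintype V] [DecidableEq V] (G : SimpleGraph V) [DecidableRel G.Adj]
    (x y : V ⊕ G.edgeSet) : Decidable (sdRel G x y) :=
  inferInstanceAs (Decidable (∃ (_ : V) (_ : G.edgeSet), _ ∧ _ ∧ _))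

/-- The subdivision `S(G)` of `G`: every edge `e = {a, b}` is replaced by a new vertex `v_e`
together with the two edges `{a, v_e}` and `{v_e, b}`. -/
def subdivision (G : SimpleGraph V) : SimpleGraph (V ⊕ G.edgeSet) :=
  SimpleGraph.fromRel (sdRel G)

instance [Fintype V] [DecidableEq V] (G : SimpleGraph V) [DecidableRel G.Adj] :
    DecidableRel (subdivision G).Adj := fun x y =>
  inferInstanceAs (Decidable (x ≠ y ∧ (sdRel G x y ∨ sdRel G y x)))

lemma step_lemma (G : SimpleGraph V) (hG : G.Connected) {v w : V} (h : v ≠ w) :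
    ∃ u, G.Adj v u ∧ G.dist u w < G.dist v w := by
  obtain ⟨p, hp⟩ := (hG v w).exists_walk_length_eq_dist
  cases p with
  | nil => exact absurd rfl h
  | @cons _ u _ hadj q =>
    refine ⟨u, hadj, ?_⟩
    have h1 := G.dist_le q
    simp only [SimpleGraph.Walk.length_cons] at hp
    omega

lemma hall_cond [Fintype V] [DecidableEq V] (G : SimpleGraph V) [DecidableRel G.Adj]
    (hG : G.Connected) (h : Fintype.card V ≤ G.edgeFinset.card) (S : Finset V) :
    S.card ≤ (S.biUnion (fun v => G.incidenceFinset v)).card := by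
  by_cases hS : S = Finset.univ
  · subst hS
    have hsub : G.edgeFinset ⊆ Finset.univ.biUnion (fun v => G.incidenceFinset v) := by
      intro e he
      induction e with
      | h a b =>
        rw [Finset.mem_biUnion]
        exact ⟨a, Finset.mem_univ a, by
          rw [SimpleGraph.mem_incidenceFinset]
          exact ⟨SimpleGraph.mem_edgeFinset.mp he, Sym2.mem_mk_left a b⟩⟩
    calc Finset.univ.card = Fintype.card V := rfl
      _ ≤ G.edgeFinset.card := h
      _ ≤ _ := Finset.card_le_card hsub
  · obtain ⟨w₀, hw₀⟩ : ∃ w₀, w₀ ∉ S := by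
      by_contra hc
      push_neg at hc
      exact hS (Finset.eq_univ_of_forall hc)
    have key : ∀ v ∈ S, ∃ u, G.Adj v u ∧ G.dist u w₀ < G.dist v w₀ := by
      intro v hv
      exact step_lemma G hG (by rintro rfl; exact hw₀ hv)
    choose! u hadj hlt using key
    apply Finset.card_le_card_of_injOn (fun v => s(v, u v))
    · intro v hv
      rw [Finset.mem_coe, Finset.mem_biUnion]
      refine ⟨v, hv, ?_⟩
      rw [SimpleGraph.mem_incidenceFinset]
      exact ⟨G.mem_edgeSet.mpr (hadj v hv), Sym2.mem_mk_left _ _⟩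
    · intro v hv v' hv' heq
      simp only [Sym2.eq, Sym2.rel_iff', Prod.mk.injEq, Prod.swap_prod_mk] at heq
      rcases heq with ⟨h1, _⟩ | ⟨h1, h2⟩
      · exact h1
      · have l1 := hlt v (Finset.mem_coe.mp hv)
        have l2 := hlt v' (Finset.mem_coe.mp hv')
        rw [h2] at l1
        rw [h1] at l1
        omega

/-- If `G` is a finite connected graph with `|E(G)| ≥ |V(G)|`, then the
subdivision `S(G)` has a matching saturating the set `V(G)` of original vertices. -/
theorem subdivision_exists_matching_saturating [Fintype V] [DecidableEq V]
    (G : SimpleGraph V) [DecidableRel G.Adj] (hG : G.Connected)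
    (h : Fintype.card V ≤ G.edgeFinset.card) :
    ∃ M ∈ matchings (subdivision G), ∀ v : V, Sum.inl v ∈ covered M := by
  obtain ⟨f, hfinj, hf⟩ :=
    (Finset.all_card_le_biUnion_card_iff_exists_injective
      (fun v : V => G.incidenceFinset v)).mp (hall_cond G hG h)
  have hmem : ∀ v : V, f v ∈ G.incidenceSet v := by
    intro v
    exact (G.mem_incidenceFinset v (f v)).mp (hf v)
  have hedge : ∀ v : V, f v ∈ G.edgeSet := fun v => (hmem v).1
  set ev : V → G.edgeSet := fun v => ⟨f v, hedge v⟩ with hev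
  set M : Finset (Sym2 (V ⊕ G.edgeSet)) :=
    Finset.univ.image (fun v : V => s(Sum.inl v, Sum.inr (ev v))) with hM
  have hE : ∀ v : V, (subdivision G).Adj (Sum.inl v) (Sum.inr (ev v)) := by
    intro v
    refine ⟨by simp, Or.inl ⟨v, ev v, rfl, rfl, (hmem v).2⟩⟩
  have hmemM : ∀ {x} (hx : x ∈ M), ∃ v : V, x = s(Sum.inl v, Sum.inr (ev v)) := by
    intro x hx
    rw [hM, Finset.mem_image] at hx
    obtain ⟨v, _, hv⟩ := hx
    exact ⟨v, hv.symm⟩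
  refine ⟨M, ?_, ?_⟩
  · simp only [matchings, Finset.mem_filter, Finset.mem_powerset, Finset.mem_univ, true_and]
    constructor
    · intro x hx
      obtain ⟨v, rfl⟩ := hmemM hx
      exact SimpleGraph.mem_edgeFinset.mpr (hE v)
    · intro e he f' hf' hne w hwe hwf
      obtain ⟨v, rfl⟩ := hmemM he
      obtain ⟨v', rfl⟩ := hmemM hf'
      have hvv' : v ≠ v' := by rintro rfl; exact hne rfl
      rw [Sym2.mem_iff] at hwe hwf
      rcases hwe with rfl | rfl <;> rcases hwf with h' | h'
      · exact hvv' (Sum.inl.inj h')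
      · simp at h'
      · simp at h'
      · have : ev v = ev v' := Sum.inr.inj h'
        exact hvv' (hfinj (Subtype.ext_iff.mp this))
  · intro v
    rw [covered, Finset.mem_filter]
    refine ⟨Finset.mem_univ _, s(Sum.inl v, Sum.inr (ev v)), ?_, Sym2.mem_mk_left _ _⟩
    rw [hM, Finset.mem_image]
    exact ⟨v, Finset.mem_univ v, rfl⟩

end LM
end

section
/- Let F be a finite simple forest. Then the multivariate matching polynomial of F equals the determinant det(X_F − A(F)), where X_F is the diagonal matrix indexed by V(F) whose (v,v)-entry is the indeterminate x_v and A(F) is the adjacency matrix of F. -/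
namespace LM

open Finset

variable {V : Type*}

section aux
open SimpleGraph

variable [DecidableEq V]

def edgeSwap : Sym2 V → Equiv.Perm V :=
  Sym2.lift ⟨Equiv.swap, Equiv.swap_comm⟩

@[simp] lemma edgeSwap_mk (a b : V) : edgeSwap s(a, b) = Equiv.swap a b := rfl

lemma edgeSwap_apply_of_not_mem {e : Sym2 V} {v : V} (hv : v ∉ e) : edgeSwap e v = v := by
  induction e with
  | _ a b =>
    rw [Sym2.mem_iff] at hv
    push_neg at hv
    exact Equiv.swap_apply_of_ne_of_ne hv.1 hv.2

lemma edgeSwap_apply_left {a b : V} : edgeSwap s(a, b) a = b := Equiv.swap_apply_left a b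

def pdisj (M : Finset (Sym2 V)) : Prop :=
  ∀ e ∈ M, ∀ f ∈ M, e ≠ f → ∀ w : V, w ∈ e → w ∉ f

omit [DecidableEq V] in
lemma pdisj.mono {M N : Finset (Sym2 V)} (h : M ⊆ N) (hN : pdisj N) : pdisj M :=
  fun e he f hf hef w hw => hN e (h he) f (h hf) hef w hw

lemma pdisj.commute {M : Finset (Sym2 V)} (hM : pdisj M) :
    (M : Set (Sym2 V)).Pairwise (Function.onFun Commute edgeSwap) := by
  intro e he f hf hef
  apply Equiv.Perm.Disjoint.commute
  intro v
  by_cases hv : v ∈ e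
  · exact Or.inr (edgeSwap_apply_of_not_mem (hM e he f hf hef v hv))
  · exact Or.inl (edgeSwap_apply_of_not_mem hv)

open scoped Classical in
noncomputable def permOf (M : Finset (Sym2 V)) : Equiv.Perm V :=
  if h : (M : Set (Sym2 V)).Pairwise (Function.onFun Commute edgeSwap) then
    M.noncommProd edgeSwap h
  else 1

lemma permOf_eq {M : Finset (Sym2 V)} (hM : pdisj M) :
    permOf M = M.noncommProd edgeSwap hM.commute := by
  rw [permOf, dif_pos hM.commute]

lemma permOf_insert {e : Sym2 V} {M : Finset (Sym2 V)} (he : e ∉ M)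
    (hM : pdisj (insert e M)) :
    permOf (insert e M) = edgeSwap e * permOf M := by
  rw [permOf_eq hM, permOf_eq (hM.mono (subset_insert e M)),
    Finset.noncommProd_insert_of_notMem _ _ _ _ he]

lemma permOf_apply_of_not_mem {M : Finset (Sym2 V)} (hM : pdisj M) {v : V}
    (hv : ∀ e ∈ M, v ∉ e) : permOf M v = v := by
  classical
  induction M using Finset.induction with
  | empty => rw [permOf_eq hM]; simp
  | @insert e M hnm ih =>
    rw [permOf_insert hnm hM]
    have h1 : permOf M v = v := ih (hM.mono (subset_insert e M))
      (fun f hf => hv f (mem_insert_of_mem hf))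
    simp only [Equiv.Perm.mul_apply, h1]
    exact edgeSwap_apply_of_not_mem (hv e (mem_insert_self e M))

lemma permOf_apply_pair {M : Finset (Sym2 V)} (hM : pdisj M) {a b : V}
    (hab : s(a, b) ∈ M) : permOf M a = b := by
  classical
  have h1 : permOf M = permOf (insert s(a,b) (M.erase s(a,b))) := by
    rw [Finset.insert_erase hab]
  rw [h1, permOf_insert (Finset.notMem_erase _ _) (by rwa [Finset.insert_erase hab])]
  have h2 : permOf (M.erase s(a,b)) a = a := by
    apply permOf_apply_of_not_mem (hM.mono (Finset.erase_subset _ _))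
    intro f hf haf
    exact hM _ hab f (Finset.mem_of_mem_erase hf) (Finset.ne_of_mem_erase hf).symm a
      (by simp) haf
  simp [h2, edgeSwap_apply_left]

lemma sign_permOf [Fintype V] {M : Finset (Sym2 V)} (hM : pdisj M) (hd : ∀ e ∈ M, ¬e.IsDiag) :
    Equiv.Perm.sign (permOf M) = (-1) ^ M.card := by
  rw [permOf_eq hM, Finset.map_noncommProd (g := Equiv.Perm.sign),
    Finset.noncommProd_eq_prod]
  rw [← Finset.prod_const (-1 : ℤˣ)]
  apply Finset.prod_congr rfl
  intro e he
  induction e with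
  | _ a b =>
    have hab : a ≠ b := by simpa using hd _ he
    simpa using Equiv.Perm.sign_swap hab

variable [Fintype V] {F : SimpleGraph V} [DecidableRel F.Adj]

lemma mem_matchings_iff {M : Finset (Sym2 V)} :
    M ∈ matchings F ↔ M ⊆ F.edgeFinset ∧ pdisj M := by
  rw [matchings, mem_filter, mem_powerset]; rfl

lemma mem_covered_iff {M : Finset (Sym2 V)} {v : V} :
    v ∈ covered M ↔ ∃ e ∈ M, v ∈ e := by simp [covered]

lemma not_isDiag_of_mem {M : Finset (Sym2 V)} (hsub : M ⊆ F.edgeFinset) {e : Sym2 V}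
    (he : e ∈ M) : ¬e.IsDiag :=
  F.not_isDiag_of_mem_edgeSet (mem_edgeFinset.mp (hsub he))

lemma permOf_good {M : Finset (Sym2 V)} (hsub : M ⊆ F.edgeFinset) (hM : pdisj M) (v : V) :
    permOf M v = v ∨ F.Adj (permOf M v) v := by
  by_cases hv : v ∈ covered M
  · obtain ⟨e, he, hve⟩ := mem_covered_iff.mp hv
    obtain ⟨w, rfl⟩ := Sym2.mem_iff_exists.mp hve
    have hadj : F.Adj v w := (mem_edgeSet F).mp (mem_edgeFinset.mp (hsub he))
    rw [permOf_apply_pair hM he]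
    exact Or.inr hadj.symm
  · left
    apply permOf_apply_of_not_mem hM
    intro e he hve
    exact hv (mem_covered_iff.mpr ⟨e, he, hve⟩)

lemma covered_eq_biUnion {M : Finset (Sym2 V)} :
    covered M = M.biUnion (fun e => univ.filter (· ∈ e)) := by
  ext v; simp [covered]

lemma prod_covered_neg_one {M : Finset (Sym2 V)} (hsub : M ⊆ F.edgeFinset) (hM : pdisj M) :
    (∏ _v ∈ covered M, (-1 : MvPolynomial V ℝ)) = 1 := by
  rw [covered_eq_biUnion, Finset.prod_biUnion]
  · apply Finset.prod_eq_one
    intro e he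
    induction e with
    | _ a b =>
      have hab : a ≠ b := by simpa using not_isDiag_of_mem hsub he
      have : univ.filter (· ∈ s(a,b)) = {a, b} := by
        ext w; simp [Sym2.mem_iff]
      rw [this, Finset.prod_const, Finset.card_pair hab]
      ring
  · intro e he f hf hef
    show Disjoint _ _
    rw [Finset.disjoint_left]
    intro w hw hw'
    rw [mem_filter] at hw hw'
    exact hM e he f hf hef w hw.2 hw'.2

lemma det_term_eq {M : Finset (Sym2 V)} (hsub : M ⊆ F.edgeFinset) (hM : pdisj M) :
    ((Equiv.Perm.sign (permOf M) : ℤ) : MvPolynomial V ℝ) *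
      ∏ v, (Matrix.diagonal (fun v : V => (MvPolynomial.X v : MvPolynomial V ℝ)) -
        F.adjMatrix (MvPolynomial V ℝ)) (permOf M v) v
      = (-1 : MvPolynomial V ℝ) ^ M.card * ∏ v ∈ Finset.univ \ covered M, MvPolynomial.X v := by
  have hsign : ((Equiv.Perm.sign (permOf M) : ℤ) : MvPolynomial V ℝ)
      = (-1 : MvPolynomial V ℝ) ^ M.card := by
    rw [sign_permOf hM (fun e he => not_isDiag_of_mem hsub he)]
    push_cast
    ring
  rw [hsign]
  congr 1
  rw [← Finset.prod_sdiff (Finset.subset_univ (covered M))]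
  have h1 : ∀ v ∈ Finset.univ \ covered M,
      (Matrix.diagonal (fun v : V => (MvPolynomial.X v : MvPolynomial V ℝ)) -
        F.adjMatrix (MvPolynomial V ℝ)) (permOf M v) v = MvPolynomial.X v := by
    intro v hv
    rw [Finset.mem_sdiff] at hv
    have hfix : permOf M v = v := permOf_apply_of_not_mem hM
      (fun e he hve => hv.2 (mem_covered_iff.mpr ⟨e, he, hve⟩))
    rw [Matrix.sub_apply, hfix, Matrix.diagonal_apply_eq, adjMatrix_apply,
      if_neg (F.irrefl), sub_zero]
  have h2 : ∀ v ∈ covered M,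
      (Matrix.diagonal (fun v : V => (MvPolynomial.X v : MvPolynomial V ℝ)) -
        F.adjMatrix (MvPolynomial V ℝ)) (permOf M v) v = -1 := by
    intro v hv
    obtain ⟨e, he, hve⟩ := mem_covered_iff.mp hv
    obtain ⟨w, rfl⟩ := Sym2.mem_iff_exists.mp hve
    have hadj : F.Adj v w := (mem_edgeSet F).mp (mem_edgeFinset.mp (hsub he))
    have hperm : permOf M v = w := permOf_apply_pair hM he
    rw [Matrix.sub_apply, hperm, Matrix.diagonal_apply_ne _ hadj.ne.symm, adjMatrix_apply,
      if_pos hadj.symm, zero_sub]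
  rw [Finset.prod_congr rfl h1, Finset.prod_congr rfl h2, prod_covered_neg_one hsub hM,
    mul_one]



/-- Walk following a function along adjacencies. -/
def buildWalk (F : SimpleGraph V) (f : V → V) (u : V)
    (h : ∀ n : ℕ, F.Adj (f^[n] u) (f^[n+1] u)) : (n : ℕ) → F.Walk u (f^[n] u)
  | 0 => Walk.nil
  | n + 1 => (buildWalk F f u h n).concat (h n)

lemma buildWalk_support (F : SimpleGraph V) (f : V → V) (u : V)
    (h : ∀ n : ℕ, F.Adj (f^[n] u) (f^[n+1] u)) (n : ℕ) :
    (buildWalk F f u h n).support = (List.range (n+1)).map (fun i => f^[i] u) := by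
  induction n with
  | zero => simp [buildWalk]
  | succ n ih =>
    rw [buildWalk, Walk.support_concat, ih, List.range_succ (n := n + 1), List.map_append]
    simp [List.concat_eq_append]

lemma buildWalk_edges (F : SimpleGraph V) (f : V → V) (u : V)
    (h : ∀ n : ℕ, F.Adj (f^[n] u) (f^[n+1] u)) (n : ℕ) :
    (buildWalk F f u h n).edges = (List.range n).map (fun i => s(f^[i] u, f^[i+1] u)) := by
  induction n with
  | zero => simp [buildWalk]
  | succ n ih =>
    rw [buildWalk, Walk.edges_concat, ih, List.range_succ, List.map_append]
    simp [List.concat_eq_append]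

/-- On an acyclic graph, a permutation moving only along edges is an involution. -/
lemma good_involutive [Fintype V] [DecidableEq V] {F : SimpleGraph V} (hF : F.IsAcyclic)
    (σ : Equiv.Perm V) (h : ∀ v, σ v = v ∨ F.Adj (σ v) v) (v : V) : σ (σ v) = v := by
  by_contra hvv
  have hv : σ v ≠ v := fun hv => hvv (by rw [hv, hv])
  have two : (⇑σ)^[2] v = σ (σ v) := by
    rw [show (2:ℕ) = 1+1 from rfl, Function.iterate_succ_apply', Function.iterate_one]
  have hmoved : ∀ n : ℕ, σ ((⇑σ)^[n] v) ≠ (⇑σ)^[n] v := by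
    intro n
    induction n with
    | zero => exact hv
    | succ n ih =>
      rw [Function.iterate_succ_apply']
      exact fun hc => ih (σ.injective hc)
  have hadj : ∀ n : ℕ, F.Adj ((⇑σ)^[n] v) ((⇑σ)^[n+1] v) := by
    intro n
    rw [Function.iterate_succ_apply']
    exact ((h _).resolve_left (hmoved n)).symm
  have hper : v ∈ Function.periodicPts (⇑σ) :=
    ⟨orderOf σ, orderOf_pos σ, by
      simp only [Function.IsPeriodicPt, Function.IsFixedPt]
      rw [← Equiv.Perm.coe_pow, pow_orderOf_eq_one]
      rfl⟩
  set k := Function.minimalPeriod (⇑σ) v with hk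
  have hkpos : 0 < k := Function.minimalPeriod_pos_of_mem_periodicPts hper
  have hkfix : (⇑σ)^[k] v = v := Function.iterate_minimalPeriod
  have hinj : (Set.Iio k).InjOn (fun i => (⇑σ)^[i] v) := Function.iterate_injOn_Iio_minimalPeriod
  have hk1 : k ≠ 1 := fun h1 => hv (by
    have := hkfix; rw [h1, Function.iterate_one] at this; exact this)
  have hk2 : k ≠ 2 := fun h2 => hvv (by
    have := hkfix; rw [h2, two] at this; exact this)
  have hk3 : 3 ≤ k := by omega
  have horb : ∀ i j : ℕ, i ≤ k → j ≤ k → (⇑σ)^[i] v = (⇑σ)^[j] v →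
      i = j ∨ (i = 0 ∧ j = k) ∨ (i = k ∧ j = 0) := by
    intro i j hi hj hij
    rcases Nat.lt_or_ge i k with hik | hik
    · rcases Nat.lt_or_ge j k with hjk | hjk
      · exact Or.inl (hinj hik hjk hij)
      · have hjk' : j = k := by omega
        subst hjk'
        rw [hkfix] at hij
        have : i = 0 := hinj hik hkpos (by simpa using hij)
        exact Or.inr (Or.inl ⟨this, rfl⟩)
    · have hik' : i = k := by omega
      subst hik'
      rw [hkfix] at hij
      rcases Nat.lt_or_ge j k with hjk | hjk
      · have : (0:ℕ) = j := hinj hkpos hjk (by simpa using hij)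
        exact Or.inr (Or.inr ⟨rfl, this.symm⟩)
      · exact Or.inl (by omega)
  have hadj' : ∀ n : ℕ, F.Adj ((⇑σ)^[n] (σ v)) ((⇑σ)^[n+1] (σ v)) := by
    intro n
    have := hadj (n + 1)
    rwa [Function.iterate_succ_apply, Function.iterate_succ_apply] at this
  have hend : (⇑σ)^[k-1] (σ v) = v := by
    rw [← Function.iterate_succ_apply σ (k-1) v, Nat.succ_eq_add_one,
      show k - 1 + 1 = k from by omega, hkfix]
  let P : F.Walk (σ v) v := ((buildWalk F (⇑σ) (σ v) hadj' (k-1)).copy rfl hend)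
  have hPpath : P.IsPath := by
    rw [Walk.isPath_def]
    show ((buildWalk F (⇑σ) (σ v) hadj' (k-1)).copy rfl hend).support.Nodup
    rw [Walk.support_copy, buildWalk_support]
    refine List.Nodup.map_on ?_ List.nodup_range
    intro i hi j hj hij
    rw [List.mem_range] at hi hj
    rw [← Function.iterate_succ_apply σ i v, ← Function.iterate_succ_apply σ j v] at hij
    have := horb (i+1) (j+1) (by omega) (by omega) hij
    omega
  have hPedge : s(v, σ v) ∉ P.edges := by
    show s(v, σ v) ∉ ((buildWalk F (⇑σ) (σ v) hadj' (k-1)).copy rfl hend).edges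
    rw [Walk.edges_copy, buildWalk_edges]
    intro hmem
    rw [List.mem_map] at hmem
    obtain ⟨i, hi, he⟩ := hmem
    rw [List.mem_range] at hi
    rw [← Function.iterate_succ_apply σ (i+1) v, ← Function.iterate_succ_apply σ i v,
      Sym2.eq_iff] at he
    rcases he with ⟨h1, h2⟩ | ⟨h1, h2⟩
    · have := horb (i+1) 0 (by omega) (by omega) (by simpa using h1)
      omega
    · have h1' : (⇑σ)^[i+1] v = (⇑σ)^[1] v := by simpa using h1
      have hi0 : i = 0 := by
        have := horb (i+1) 1 (by omega) (by omega) h1'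
        omega
      subst hi0
      rw [show ((0:ℕ)+1).succ = 2 from rfl, two] at h2
      exact hvv h2
  have hA : F.Adj v (σ v) := by
    have := hadj 0
    rwa [Function.iterate_zero_apply, Function.iterate_one] at this
  have hcyc : (Walk.cons hA P).IsCycle :=
    (Walk.cons_isCycle_iff P hA).mpr ⟨hPpath, hPedge⟩
  exact hF _ hcyc


def invM [Fintype V] (sg : Equiv.Perm V) : Finset (Sym2 V) :=
  sg.support.image (fun v => s(v, sg v))

variable [Fintype V]

lemma mem_invM_iff {sg : Equiv.Perm V} {e : Sym2 V} :
    e ∈ invM sg ↔ ∃ v, sg v ≠ v ∧ s(v, sg v) = e := by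
  simp [invM, Equiv.Perm.mem_support]

lemma invM_claim {sg : Equiv.Perm V} (hinv : ∀ v, sg (sg v) = v) {e : Sym2 V}
    (he : e ∈ invM sg) {u : V} (hu : u ∈ e) : e = s(u, sg u) := by
  obtain ⟨v, hv, rfl⟩ := mem_invM_iff.mp he
  rw [Sym2.mem_iff] at hu
  rcases hu with rfl | rfl
  · rfl
  · rw [hinv v, Sym2.eq_swap]

lemma invM_matching {sg : Equiv.Perm V} (hgood : ∀ v, sg v = v ∨ F.Adj (sg v) v)
    (hinv : ∀ v, sg (sg v) = v) : invM sg ∈ matchings F := by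
  rw [mem_matchings_iff]
  constructor
  · intro e he
    obtain ⟨v, hv, rfl⟩ := mem_invM_iff.mp he
    have hadj : F.Adj (sg v) v := (hgood v).resolve_left hv
    exact mem_edgeFinset.mpr ((mem_edgeSet F).mpr hadj.symm)
  · intro e he f hf hef w hwe hwf
    exact hef ((invM_claim hinv he hwe).trans (invM_claim hinv hf hwf).symm)

lemma permOf_invM {sg : Equiv.Perm V} (hgood : ∀ v, sg v = v ∨ F.Adj (sg v) v)
    (hinv : ∀ v, sg (sg v) = v) : permOf (invM sg) = sg := by
  have hp : pdisj (invM sg) := (mem_matchings_iff.mp (invM_matching hgood hinv)).2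
  ext v
  by_cases hv : sg v = v
  · rw [hv]
    apply permOf_apply_of_not_mem hp
    intro e he hve
    obtain ⟨u, hu, he'⟩ := mem_invM_iff.mp he
    have hthis := invM_claim hinv he hve
    rw [hv] at hthis
    have h3 : s(u, sg u) = s(v, v) := he'.trans hthis
    rw [Sym2.eq_iff] at h3
    rcases h3 with ⟨rfl, h4⟩ | ⟨rfl, h4⟩ <;> exact absurd h4 hu
  · exact permOf_apply_pair hp (mem_invM_iff.mpr ⟨v, hv, rfl⟩)

lemma invM_permOf {M : Finset (Sym2 V)} (hsub : M ⊆ F.edgeFinset) (hM : pdisj M) :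
    invM (permOf M) = M := by
  ext e
  constructor
  · intro he
    obtain ⟨v, hv, rfl⟩ := mem_invM_iff.mp he
    have hcov : ∃ f ∈ M, v ∈ f := by
      by_contra hc
      push_neg at hc
      exact hv (permOf_apply_of_not_mem hM hc)
    obtain ⟨f, hf, hvf⟩ := hcov
    obtain ⟨w, rfl⟩ := Sym2.mem_iff_exists.mp hvf
    rw [permOf_apply_pair hM hf]
    exact hf
  · intro he
    induction e with
    | _ a b =>
      have hab : a ≠ b := by simpa using not_isDiag_of_mem hsub he
      have hperm : permOf M a = b := permOf_apply_pair hM he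
      exact mem_invM_iff.mpr ⟨a, by rw [hperm]; exact hab.symm, by rw [hperm]⟩

theorem mvMatch_eq_det_of_isAcyclic' (hF : F.IsAcyclic) :
    mvMatch F =
      Matrix.det
        (Matrix.diagonal (fun v : V => (MvPolynomial.X v : MvPolynomial V ℝ)) -
          F.adjMatrix (MvPolynomial V ℝ)) := by
  classical
  set Bm := Matrix.diagonal (fun v : V => (MvPolynomial.X v : MvPolynomial V ℝ)) -
      F.adjMatrix (MvPolynomial V ℝ) with hBm
  set S : Finset (Equiv.Perm V) :=
    univ.filter (fun sg => ∀ v, sg v = v ∨ F.Adj (sg v) v) with hS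
  have hz : ∀ sg ∈ (univ : Finset (Equiv.Perm V)), sg ∉ S →
      ((Equiv.Perm.sign sg : ℤ) : MvPolynomial V ℝ) * ∏ i, Bm (sg i) i = 0 := by
    intro sg _ hsg
    rw [hS, mem_filter] at hsg
    push_neg at hsg
    obtain ⟨v, hv1, hv2⟩ := hsg (mem_univ sg)
    have : Bm (sg v) v = 0 := by
      rw [hBm, Matrix.sub_apply, Matrix.diagonal_apply_ne _ hv1, adjMatrix_apply,
        if_neg hv2, sub_zero]
    rw [Finset.prod_eq_zero (f := fun i => Bm (sg i) i) (mem_univ v) this, mul_zero]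
  have h1 : Matrix.det Bm = ∑ sg ∈ S,
      ((Equiv.Perm.sign sg : ℤ) : MvPolynomial V ℝ) * ∏ i, Bm (sg i) i := by
    rw [Matrix.det_apply']
    exact (Finset.sum_subset (subset_univ S) hz).symm
  rw [h1, mvMatch]
  refine Finset.sum_nbij' permOf invM ?_ ?_ ?_ ?_ ?_
  · intro M hM
    obtain ⟨hsub, hp⟩ := mem_matchings_iff.mp hM
    rw [hS, mem_filter]
    exact ⟨mem_univ _, permOf_good hsub hp⟩
  · intro sg hsg
    rw [hS, mem_filter] at hsg
    exact invM_matching hsg.2 (good_involutive hF sg hsg.2)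
  · intro M hM
    obtain ⟨hsub, hp⟩ := mem_matchings_iff.mp hM
    exact invM_permOf hsub hp
  · intro sg hsg
    rw [hS, mem_filter] at hsg
    exact permOf_invM hsg.2 (good_involutive hF sg hsg.2)
  · intro M hM
    obtain ⟨hsub, hp⟩ := mem_matchings_iff.mp hM
    exact (det_term_eq hsub hp).symm


end aux

/-- For a finite forest `F`, the multivariate matching polynomial equals
`det(X_F − A(F))`, where `X_F` is the diagonal matrix of the indeterminates `x_v` and
`A(F)` is the adjacency matrix. -/
theorem mvMatch_eq_det_of_isAcyclic [Fintype V] [DecidableEq V] (F : SimpleGraph V)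
    [DecidableRel F.Adj] (hF : F.IsAcyclic) :
    mvMatch F =
      Matrix.det
        (Matrix.diagonal (fun v : V => (MvPolynomial.X v : MvPolynomial V ℝ)) -
          F.adjMatrix (MvPolynomial V ℝ)) :=
  mvMatch_eq_det_of_isAcyclic' hF

end LM
end

section
/- Let F be a finite simple forest. Then the Laplacian matching polynomial of F equals the characteristic polynomial of its Laplacian matrix: 𝓛𝓜(F, x) = φ(L(F), x) = det(xI − L(F)). -/
namespace LM

open Finset

variable {V : Type*}

/-! ### Auxiliary material -/

lemma perm_comm_apply (σ : Equiv.Perm V) (i : V) (n : ℕ) :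
    σ ((σ ^ n) i) = (σ ^ n) (σ i) := by
  rw [← Equiv.Perm.mul_apply, ← Equiv.Perm.mul_apply, ← pow_succ, ← pow_succ']

lemma nonfixed_pow (σ : Equiv.Perm V) (i : V) (hne : σ i ≠ i) (n : ℕ) :
    σ ((σ ^ n) i) ≠ (σ ^ n) i := by
  rw [perm_comm_apply]
  exact fun hc => hne ((σ ^ n).injective hc)

/-- A walk down the orbit of a permutation whose non-fixed steps are edges. -/
def orbitWalk (F : SimpleGraph V) (σ : Equiv.Perm V) (i : V)
    (h : ∀ j, σ j ≠ j → F.Adj (σ j) j) (hne : σ i ≠ i) :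
    (n : ℕ) → F.Walk ((σ ^ n) i) i
  | 0 => SimpleGraph.Walk.nil.copy (by simp) rfl
  | (n + 1) => SimpleGraph.Walk.cons
      (show F.Adj ((σ ^ (n + 1)) i) ((σ ^ n) i) by
        have h1 : (σ ^ (n + 1)) i = σ ((σ ^ n) i) := by rw [pow_succ']; rfl
        rw [h1]; exact h _ (nonfixed_pow σ i hne n))
      (orbitWalk F σ i h hne n)

lemma orbitWalk_support (F : SimpleGraph V) (σ : Equiv.Perm V) (i : V)
    (h : ∀ j, σ j ≠ j → F.Adj (σ j) j) (hne : σ i ≠ i) (n : ℕ) :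
    (orbitWalk F σ i h hne n).support
      = ((List.range (n + 1)).reverse).map (fun m => (σ ^ m) i) := by
  induction n with
  | zero => simp [orbitWalk, List.range_succ]
  | succ n ih =>
    rw [orbitWalk, SimpleGraph.Walk.support_cons, ih]
    simp [List.range_succ]

lemma orbitWalk_length (F : SimpleGraph V) (σ : Equiv.Perm V) (i : V)
    (h : ∀ j, σ j ≠ j → F.Adj (σ j) j) (hne : σ i ≠ i) (n : ℕ) :
    (orbitWalk F σ i h hne n).length = n := by
  induction n with
  | zero => simp [orbitWalk]
  | succ n ih => rw [orbitWalk, SimpleGraph.Walk.length_cons, ih]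

/-- In a forest, a permutation all of whose non-fixed steps are edges is an involution. -/
lemma involutive_of_acyclic [Finite V] {F : SimpleGraph V} (hF : F.IsAcyclic) (σ : Equiv.Perm V)
    (h : ∀ j, σ j ≠ j → F.Adj (σ j) j) : ∀ i, σ (σ i) = i := by
  intro i
  by_contra hcc
  have hne : σ i ≠ i := fun he => hcc (by rw [he, he])
  have hper : i ∈ Function.periodicPts σ := by
    refine Function.mk_mem_periodicPts (orderOf_pos σ) ?_
    show (σ : V → V)^[orderOf σ] i = i
    exact congrArg (fun τ : Equiv.Perm V => τ i) (pow_orderOf_eq_one σ)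
  set k := Function.minimalPeriod (σ : V → V) i with hk
  have hpow : ∀ m, (σ ^ m) i = (σ : V → V)^[m] i := fun m => rfl
  have hkpos : 0 < k := Function.minimalPeriod_pos_of_mem_periodicPts hper
  have hiter : ∀ a b, a < k → b < k → (σ ^ a) i = (σ ^ b) i → a = b := by
    intro a b ha hb hab
    rw [hpow, hpow] at hab
    exact Function.iterate_injOn_Iio_minimalPeriod ha hb hab
  have hk1 : k ≠ 1 := by
    intro hc
    apply hne
    have := Function.iterate_minimalPeriod (f := (σ : V → V)) (x := i)
    rw [← hk, hc] at this
    simpa using this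
  have hk2 : k ≠ 2 := by
    intro hc
    apply hcc
    have := Function.iterate_minimalPeriod (f := (σ : V → V)) (x := i)
    rw [← hk, hc] at this
    simpa [Function.iterate_succ_apply] using this
  have hk3 : 3 ≤ k := by omega
  have hfix : (σ ^ k) i = i := by
    rw [hpow]
    exact Function.iterate_minimalPeriod
  -- the long path
  have hnodup : ((List.range ((k - 1) + 1)).reverse.map (fun m => (σ ^ m) i)).Nodup := by
    refine List.Nodup.map_on ?_ (List.nodup_reverse.mpr List.nodup_range)
    intro a ha b hb hab
    rw [List.mem_reverse, List.mem_range] at ha hb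
    exact hiter a b (by omega) (by omega) hab
  let p1 : F.Walk ((σ ^ (k - 1)) i) i := orbitWalk F σ i h hne (k - 1)
  have hp1 : p1.support.Nodup := by
    rw [orbitWalk_support]; exact hnodup
  -- the short path
  have hstep : σ ((σ ^ (k - 1)) i) = i := by
    have : (σ ^ ((k - 1) + 1)) i = σ ((σ ^ (k - 1)) i) := by rw [pow_succ']; rfl
    rw [← this]
    have : (k - 1) + 1 = k := by omega
    rw [this, hfix]
  have hne2 : (σ ^ (k - 1)) i ≠ i := by
    intro hc
    have : k - 1 = 0 := by
      refine hiter (k - 1) 0 (by omega) (by omega) ?_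
      simpa using hc
    omega
  have hadj : F.Adj ((σ ^ (k - 1)) i) i := by
    have hnf : σ ((σ ^ (k - 1)) i) ≠ (σ ^ (k - 1)) i := by rw [hstep]; exact fun hc => hne2 hc.symm
    have := h _ hnf
    rw [hstep] at this
    exact this.symm
  let p2 : F.Walk ((σ ^ (k - 1)) i) i := SimpleGraph.Walk.cons hadj SimpleGraph.Walk.nil
  have hp2 : p2.support.Nodup := by
    simp [p2, hne2]
  have := hF.path_unique ⟨p1, SimpleGraph.Walk.IsPath.mk' hp1⟩ ⟨p2, SimpleGraph.Walk.IsPath.mk' hp2⟩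
  have hp12 : p1 = p2 := Subtype.mk_eq_mk.mp this
  have hlen : p1.length = p2.length := by rw [hp12]
  rw [orbitWalk_length] at hlen
  simp only [SimpleGraph.Walk.length_cons, SimpleGraph.Walk.length_nil, p2] at hlen
  omega

section Match

variable [Fintype V] [DecidableEq V]

/-- The matching associated to an involution. -/
def perMatch (σ : Equiv.Perm V) : Finset (Sym2 V) :=
  σ.support.image (fun v => s(v, σ v))

lemma mem_perMatch_eq {σ : Equiv.Perm V} (hinv : ∀ j, σ (σ j) = j) {w : V} {j : V}
    (hw : w ∈ s(j, σ j)) : s(j, σ j) = s(w, σ w) := by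
  rw [Sym2.mem_iff] at hw
  rcases hw with rfl | rfl
  · rfl
  · rw [hinv j, Sym2.eq_swap]

lemma coveredPerMatch {σ : Equiv.Perm V} (hinv : ∀ j, σ (σ j) = j) :
    covered (perMatch σ) = σ.support := by
  ext v
  simp only [covered, perMatch, Finset.mem_filter, Finset.mem_univ, true_and,
    Finset.mem_image, Equiv.Perm.mem_support]
  constructor
  · rintro ⟨e, ⟨j, hj, rfl⟩, hv⟩
    rw [Sym2.mem_iff] at hv
    rcases hv with rfl | rfl
    · exact hj
    · rw [hinv j]; exact fun hc => hj hc.symm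
  · intro hv
    exact ⟨s(v, σ v), ⟨v, hv, rfl⟩, Sym2.mem_mk_left _ _⟩

lemma card_support_eq {σ : Equiv.Perm V} (hinv : ∀ j, σ (σ j) = j) :
    σ.support.card = 2 * (perMatch σ).card := by
  rw [Finset.card_eq_sum_card_image (fun v => s(v, σ v)) σ.support]
  rw [Finset.sum_congr rfl (g := fun _ => 2), Finset.sum_const, smul_eq_mul, mul_comm]
  · rfl
  intro e he
  rw [Finset.mem_image] at he
  obtain ⟨j, hj, rfl⟩ := he
  have hjne : σ j ≠ j := Equiv.Perm.mem_support.mp hj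
  have hfil : Finset.filter (fun v => s(v, σ v) = s(j, σ j)) σ.support = {j, σ j} := by
    ext w
    simp only [Finset.mem_filter, Finset.mem_insert, Finset.mem_singleton,
      Equiv.Perm.mem_support]
    constructor
    · rintro ⟨hw, hsw⟩
      rw [Sym2.eq_iff] at hsw
      rcases hsw with ⟨rfl, _⟩ | ⟨rfl, _⟩
      · exact Or.inl rfl
      · exact Or.inr rfl
    · rintro (rfl | rfl)
      · exact ⟨hjne, rfl⟩
      · refine ⟨by rw [hinv j]; exact fun hc => hjne hc.symm, ?_⟩
        rw [hinv j, Sym2.eq_swap]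
  rw [hfil, Finset.card_insert_of_notMem (by simpa using fun hc => hjne hc.symm),
    Finset.card_singleton]

lemma sign_involution (σ : Equiv.Perm V) (hinv : ∀ j, σ (σ j) = j) :
    Equiv.Perm.sign σ = (-1 : ℤˣ) ^ (perMatch σ).card := by
  have h2 : σ ^ 2 = 1 := by
    ext j
    simp [pow_succ, hinv j]
  have hrep : σ.cycleType = Multiset.replicate (Multiset.card σ.cycleType) 2 := by
    rw [Multiset.eq_replicate_card]
    intro n hn
    have h1 : n ∣ 2 := (Equiv.Perm.dvd_of_mem_cycleType hn).trans (orderOf_dvd_of_pow_eq_one h2)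
    exact le_antisymm (Nat.le_of_dvd two_pos h1) (Equiv.Perm.two_le_of_mem_cycleType hn)
  have hsum : σ.cycleType.sum = 2 * Multiset.card σ.cycleType := by
    rw [hrep]
    simp [Multiset.sum_replicate, mul_comm]
  have hcard : Multiset.card σ.cycleType = (perMatch σ).card := by
    have := Equiv.Perm.sum_cycleType σ
    rw [hsum] at this
    have h3 := card_support_eq hinv
    omega
  rw [Equiv.Perm.sign_of_cycleType, hsum, ← hcard]
  rw [pow_add, pow_mul]
  norm_num

/-- The function associated with a matching, sending each covered vertex to its partner. -/
noncomputable def matchFun (M : Finset (Sym2 V)) (v : V) : V :=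
  @dite _ (∃ e ∈ M, v ∈ e) (Classical.propDecidable _)
    (fun h => Sym2.Mem.other h.choose_spec.2) (fun _ => v)

lemma matchFun_eq_self {M : Finset (Sym2 V)} {v : V} (h : ¬ ∃ e ∈ M, v ∈ e) :
    matchFun M v = v := by
  rw [matchFun, dif_neg h]

variable {F : SimpleGraph V} [DecidableRel F.Adj]

lemma matchings_pairwise {M : Finset (Sym2 V)} (hM : M ∈ matchings F) :
    ∀ e ∈ M, ∀ f ∈ M, e ≠ f → ∀ w : V, w ∈ e → w ∉ f :=
  (Finset.mem_filter.mp hM).2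

lemma matchings_subset {M : Finset (Sym2 V)} (hM : M ∈ matchings F) :
    M ⊆ F.edgeFinset :=
  Finset.mem_powerset.mp (Finset.mem_filter.mp hM).1

lemma matchFun_spec {M : Finset (Sym2 V)} (hM : M ∈ matchings F) {e : Sym2 V} {v : V}
    (he : e ∈ M) (hv : v ∈ e) : s(v, matchFun M v) = e := by
  have h : ∃ e ∈ M, v ∈ e := ⟨e, he, hv⟩
  rw [matchFun, dif_pos h, Sym2.other_spec h.choose_spec.2]
  by_contra hne
  exact matchings_pairwise hM _ h.choose_spec.1 e he hne v h.choose_spec.2 hv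

lemma matchFun_ne {M : Finset (Sym2 V)} (hM : M ∈ matchings F) {e : Sym2 V} {v : V}
    (he : e ∈ M) (hv : v ∈ e) : matchFun M v ≠ v := by
  intro hc
  have hs := matchFun_spec hM he hv
  rw [hc] at hs
  have hd : e.IsDiag := by rw [← hs]; exact Sym2.mk_isDiag_iff.mpr rfl
  exact SimpleGraph.not_isDiag_of_mem_edgeSet F
    (SimpleGraph.mem_edgeFinset.mp (matchings_subset hM he)) hd

lemma matchFun_involutive {M : Finset (Sym2 V)} (hM : M ∈ matchings F) :
    Function.Involutive (matchFun M) := by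
  intro v
  by_cases h : ∃ e ∈ M, v ∈ e
  · obtain ⟨e, he, hv⟩ := h
    have h1 := matchFun_spec hM he hv
    have hw : matchFun M v ∈ e := by rw [← h1]; exact Sym2.mem_mk_right _ _
    have h2 := matchFun_spec hM he hw
    have hvw : matchFun M v ≠ v := matchFun_ne hM he hv
    have h3 : s(matchFun M v, matchFun M (matchFun M v)) = s(v, matchFun M v) :=
      h2.trans h1.symm
    rw [Sym2.eq_iff] at h3
    rcases h3 with ⟨h4, _⟩ | ⟨_, h4⟩
    · exact absurd h4 hvw
    · exact h4
  · rw [matchFun_eq_self h, matchFun_eq_self h]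

/-- The involution (permutation) associated with a matching. -/
noncomputable def matchPerm {M : Finset (Sym2 V)} (hM : M ∈ matchings F) : Equiv.Perm V :=
  Function.Involutive.toPerm _ (matchFun_involutive hM)

lemma matchPerm_apply {M : Finset (Sym2 V)} (hM : M ∈ matchings F) (v : V) :
    matchPerm hM v = matchFun M v := rfl

lemma matchPerm_adj {M : Finset (Sym2 V)} (hM : M ∈ matchings F) :
    ∀ i, matchPerm hM i ≠ i → F.Adj (matchPerm hM i) i := by
  intro i hne
  rw [matchPerm_apply] at hne ⊢
  have h : ∃ e ∈ M, i ∈ e := by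
    by_contra hh
    exact hne (matchFun_eq_self hh)
  obtain ⟨e, he, hi⟩ := h
  have hs := matchFun_spec hM he hi
  have : s(i, matchFun M i) ∈ F.edgeSet := by
    rw [hs]
    exact SimpleGraph.mem_edgeFinset.mp (matchings_subset hM he)
  exact ((SimpleGraph.mem_edgeSet F).mp this).symm

lemma perMatch_matchPerm {M : Finset (Sym2 V)} (hM : M ∈ matchings F) :
    perMatch (matchPerm hM) = M := by
  ext e
  simp only [perMatch, Finset.mem_image, Equiv.Perm.mem_support]
  constructor
  · rintro ⟨v, hv, rfl⟩
    rw [matchPerm_apply] at hv ⊢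
    have h : ∃ e ∈ M, v ∈ e := by
      by_contra hh
      exact hv (matchFun_eq_self hh)
    obtain ⟨e, he, hve⟩ := h
    rw [matchFun_spec hM he hve]
    exact he
  · intro he
    refine ⟨e.out.1, ?_, ?_⟩
    · rw [matchPerm_apply]
      exact matchFun_ne hM he (Sym2.out_fst_mem e)
    · rw [matchPerm_apply, matchFun_spec hM he (Sym2.out_fst_mem e)]

lemma perMatch_mem_matchings {σ : Equiv.Perm V}
    (hadj : ∀ i, σ i ≠ i → F.Adj (σ i) i) (hinv : ∀ j, σ (σ j) = j) :
    perMatch σ ∈ matchings F := by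
  rw [matchings, Finset.mem_filter, Finset.mem_powerset]
  constructor
  · intro e he
    rw [perMatch, Finset.mem_image] at he
    obtain ⟨j, hj, rfl⟩ := he
    rw [SimpleGraph.mem_edgeFinset, SimpleGraph.mem_edgeSet]
    exact (hadj j (Equiv.Perm.mem_support.mp hj)).symm
  · intro e he f hf hne w hwe hwf
    rw [perMatch, Finset.mem_image] at he hf
    obtain ⟨j, hj, rfl⟩ := he
    obtain ⟨l, hl, rfl⟩ := hf
    exact hne ((mem_perMatch_eq hinv hwe).trans (mem_perMatch_eq hinv hwf).symm)

lemma matchPerm_perMatch {σ : Equiv.Perm V}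
    (hadj : ∀ i, σ i ≠ i → F.Adj (σ i) i) (hinv : ∀ j, σ (σ j) = j)
    (hm : perMatch σ ∈ matchings F) : matchPerm hm = σ := by
  ext v
  rw [matchPerm_apply]
  by_cases hv : σ v = v
  · rw [matchFun_eq_self, hv]
    rintro ⟨e, he, hve⟩
    rw [perMatch, Finset.mem_image] at he
    obtain ⟨j, hj, rfl⟩ := he
    have hj' : σ j ≠ j := Equiv.Perm.mem_support.mp hj
    rw [Sym2.mem_iff] at hve
    rcases hve with rfl | rfl
    · exact hj' hv
    · exact hj' (((hinv j).symm.trans hv).symm)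
  · have he : s(v, σ v) ∈ perMatch σ := by
      rw [perMatch, Finset.mem_image]
      exact ⟨v, Equiv.Perm.mem_support.mpr hv, rfl⟩
    have := matchFun_spec hm he (Sym2.mem_mk_left _ _)
    exact Sym2.congr_right.mp this

end Match

/-- For a finite forest `F`, the Laplacian matching polynomial equals the
characteristic polynomial `det(xI − L(F))` of the Laplacian matrix `L(F)`. -/
theorem lapMatch_eq_charpoly_lapMatrix_of_isAcyclic [Fintype V] [DecidableEq V]
    (F : SimpleGraph V) [DecidableRel F.Adj] (hF : F.IsAcyclic) :
    lapMatch F = (F.lapMatrix ℝ).charpoly := by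
  classical
  rw [Matrix.charpoly, Matrix.det_apply']
  rw [← Finset.sum_filter_add_sum_filter_not Finset.univ
    (fun σ : Equiv.Perm V => ∀ i, σ i ≠ i → F.Adj (σ i) i)]
  have hzero : ∑ σ ∈ Finset.univ.filter
      (fun σ : Equiv.Perm V => ¬ ∀ i, σ i ≠ i → F.Adj (σ i) i),
      ((Equiv.Perm.sign σ : ℤ) : Polynomial ℝ) *
        ∏ i, (Matrix.charmatrix (F.lapMatrix ℝ)) (σ i) i = 0 := by
    refine Finset.sum_eq_zero fun σ hσ => ?_
    rw [Finset.mem_filter] at hσ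
    push_neg at hσ
    obtain ⟨i, hne, hnadj⟩ := hσ.2
    apply mul_eq_zero_of_right
    apply Finset.prod_eq_zero (Finset.mem_univ i)
    rw [Matrix.charmatrix_apply_ne _ _ _ hne]
    have hL : F.lapMatrix ℝ (σ i) i = 0 := by
      simp [SimpleGraph.lapMatrix, SimpleGraph.degMatrix, Matrix.sub_apply,
        Matrix.diagonal_apply_ne _ hne, hnadj]
    rw [hL]
    simp
  rw [hzero, add_zero, lapMatch]
  -- the key term lemma
  have TERM : ∀ σ : Equiv.Perm V, (∀ i, σ i ≠ i → F.Adj (σ i) i) → (∀ j, σ (σ j) = j) →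
      (-1 : Polynomial ℝ) ^ (perMatch σ).card *
        ∏ v ∈ Finset.univ \ covered (perMatch σ),
          (Polynomial.X - Polynomial.C (F.degree v : ℝ))
      = ((Equiv.Perm.sign σ : ℤ) : Polynomial ℝ) *
          ∏ i, (Matrix.charmatrix (F.lapMatrix ℝ)) (σ i) i := by
    intro σ hadj hinv
    have hsign : ((Equiv.Perm.sign σ : ℤ) : Polynomial ℝ)
        = (-1 : Polynomial ℝ) ^ (perMatch σ).card := by
      rw [sign_involution σ hinv]
      push_cast
      norm_num
    rw [hsign]
    congr 1
    rw [coveredPerMatch hinv, ← Finset.compl_eq_univ_sdiff]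
    rw [← Finset.prod_mul_prod_compl σ.support
      (fun i => (Matrix.charmatrix (F.lapMatrix ℝ)) (σ i) i)]
    have h1 : ∏ i ∈ σ.support, (Matrix.charmatrix (F.lapMatrix ℝ)) (σ i) i = 1 := by
      refine Finset.prod_eq_one fun i hi => ?_
      have hne : σ i ≠ i := Equiv.Perm.mem_support.mp hi
      rw [Matrix.charmatrix_apply_ne _ _ _ hne]
      have hL : F.lapMatrix ℝ (σ i) i = -1 := by
        simp [SimpleGraph.lapMatrix, SimpleGraph.degMatrix, Matrix.sub_apply,
          Matrix.diagonal_apply_ne _ hne, hadj i hne]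
      rw [hL]
      simp
    have h2 : ∏ i ∈ σ.supportᶜ, (Matrix.charmatrix (F.lapMatrix ℝ)) (σ i) i
        = ∏ i ∈ σ.supportᶜ, (Polynomial.X - Polynomial.C (F.degree i : ℝ)) := by
      refine Finset.prod_congr rfl fun i hi => ?_
      have hfix : σ i = i := by
        have := Finset.mem_compl.mp hi
        rwa [Equiv.Perm.notMem_support] at this
      rw [hfix, Matrix.charmatrix_apply_eq]
      have hL : F.lapMatrix ℝ i i = (F.degree i : ℝ) := by
        simp [SimpleGraph.lapMatrix, SimpleGraph.degMatrix, Matrix.sub_apply,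
          Matrix.diagonal_apply_eq]
      rw [hL]
    rw [h1, one_mul, h2]
  refine Finset.sum_bij' (fun M hM => matchPerm hM) (fun σ hσ => perMatch σ)
    ?_ ?_ ?_ ?_ ?_
  · intro M hM
    rw [Finset.mem_filter]
    exact ⟨Finset.mem_univ _, matchPerm_adj hM⟩
  · intro σ hσ
    rw [Finset.mem_filter] at hσ
    exact perMatch_mem_matchings hσ.2 (involutive_of_acyclic hF σ hσ.2)
  · intro M hM
    exact perMatch_matchPerm hM
  · intro σ hσ
    rw [Finset.mem_filter] at hσ
    exact matchPerm_perMatch hσ.2 (involutive_of_acyclic hF σ hσ.2) _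
  · intro M hM
    have hadj := matchPerm_adj hM
    have hinv := involutive_of_acyclic hF (matchPerm hM) hadj
    have := TERM (matchPerm hM) hadj hinv
    rw [perMatch_matchPerm hM] at this
    exact this

end LM
end
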